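/- arXiv:2506.12954 — 10 statements merged into one kernel-verified Lean document; each statement's English description precedes it below -/
import Mathlib

section
/- Let r ≥ 1 and C₀ > 0. Suppose the mesh 0 = t_0 < t_1 < ⋯ < t_M satisfies τ_j ≤ C₀ τ^{1/r} t_j^{1−1/r} for all 1 ≤ j ≤ M, where τ_j := t_j − t_{j−1} and τ := t_1. Then there exists a constant c ∈ (0, 1/2), depending only on r and C₀, such that t_{j−1} ≥ c·t_j for all 2 ≤ j ≤ M. -/
/-- On a mesh `0 = t 0 < t 1 < ⋯ < t M` satisfying the quasi-graded
condition `τ_j ≤ C₀ τ^{1/r} t_j^{1-1/r}`, there is a constant `c ∈ (0, 1/2)`,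
depending only on `r` and `C₀`, with `t_{j-1} ≥ c * t_j` for all `2 ≤ j ≤ M`. -/
theorem stmt0 (r C₀ : ℝ) (hr : 1 ≤ r) (hC₀ : 0 < C₀) :
    ∃ c : ℝ, 0 < c ∧ c < 1 / 2 ∧
      ∀ (M : ℕ) (t : ℕ → ℝ),
        t 0 = 0 →
        (∀ j, 1 ≤ j → j ≤ M → t (j - 1) < t j) →
        (∀ j, 1 ≤ j → j ≤ M →
          t j - t (j - 1) ≤ C₀ * (t 1) ^ (1 / r) * (t j) ^ (1 - 1 / r)) →
        ∀ j, 2 ≤ j → j ≤ M → c * t j ≤ t (j - 1) := by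
  have hr0 : (0:ℝ) < r := lt_of_lt_of_le one_pos hr
  have hbpos : (0:ℝ) < 1 / (2 * C₀) := by positivity
  refine ⟨min (1/4) ((1/(2*C₀)) ^ r), lt_min (by norm_num) (Real.rpow_pos_of_pos hbpos r),
    lt_of_le_of_lt (min_le_left _ _) (by norm_num), ?_⟩
  intro M t ht0 hinc hcond j hj2 hjM
  set c : ℝ := min (1/4) ((1/(2*C₀)) ^ r) with hc_def
  have hc4 : c ≤ 1/4 := min_le_left _ _
  have hcb : c ≤ (1/(2*C₀)) ^ r := min_le_right _ _
  have hcpos : 0 < c := lt_min (by norm_num) (Real.rpow_pos_of_pos hbpos r)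
  have key : ∀ k, 1 ≤ k → k ≤ M → t 1 ≤ t k := by
    intro k
    induction k with
    | zero => intro h; omega
    | succ n ih =>
      intro h1 hM
      rcases Nat.eq_or_lt_of_le h1 with h | h
      · rw [← h]
      · have hn1 : 1 ≤ n := by omega
        have hs := hinc (n+1) (by omega) hM
        simp only [Nat.add_sub_cancel] at hs
        exact le_trans (ih hn1 (by omega)) hs.le
  have hj1 : 1 ≤ j - 1 := by omega
  have hjm1M : j - 1 ≤ M := by omega
  have h1jm : t 1 ≤ t (j-1) := key (j-1) hj1 hjm1M
  have ht1pos : 0 < t 1 := by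
    have := hinc 1 le_rfl (by omega)
    simpa [ht0] using this
  have htjm_pos : 0 < t (j-1) := lt_of_lt_of_le ht1pos h1jm
  have hstep : t (j-1) < t j := hinc j (by omega) hjM
  have htjpos : 0 < t j := lt_trans htjm_pos hstep
  by_contra hlt
  push_neg at hlt
  have hrinv : (0:ℝ) < 1/r := by positivity
  have hcr : C₀ * c ^ (1/r) ≤ 1/2 := by
    have h1 : c ^ (1/r) ≤ ((1/(2*C₀)) ^ r) ^ (1/r) :=
      Real.rpow_le_rpow hcpos.le hcb hrinv.le
    have h2 : ((1/(2*C₀)) ^ r) ^ (1/r) = 1/(2*C₀) := by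
      rw [← Real.rpow_mul hbpos.le, mul_one_div, div_self hr0.ne', Real.rpow_one]
    rw [h2] at h1
    calc C₀ * c ^ (1/r) ≤ C₀ * (1/(2*C₀)) :=
          mul_le_mul_of_nonneg_left h1 hC₀.le
      _ = 1/2 := by field_simp
  have hc1 := hcond j (by omega) hjM
  have hpow : (0:ℝ) ≤ (t j) ^ (1-1/r) := Real.rpow_nonneg htjpos.le _
  have hmono : (t 1) ^ (1/r) ≤ (t (j-1)) ^ (1/r) :=
    Real.rpow_le_rpow ht1pos.le h1jm hrinv.le
  have h2 : t j - t (j-1) ≤ C₀ * (t (j-1)) ^ (1/r) * (t j) ^ (1-1/r) := by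
    exact le_trans hc1
      (mul_le_mul_of_nonneg_right (mul_le_mul_of_nonneg_left hmono hC₀.le) hpow)
  have h3 : (t (j-1)) ^ (1/r) ≤ (c * t j) ^ (1/r) :=
    Real.rpow_le_rpow htjm_pos.le hlt.le hrinv.le
  have hsplit : (c * t j) ^ (1/r) = c ^ (1/r) * (t j) ^ (1/r) :=
    Real.mul_rpow hcpos.le htjpos.le
  have hcomb : (t j) ^ (1/r) * (t j) ^ (1-1/r) = t j := by
    have he : (1/r) + (1 - 1/r) = 1 := by ring
    rw [← Real.rpow_add htjpos, he, Real.rpow_one]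
  have h4 : t j - t (j-1) ≤ (1/2) * t j := by
    calc t j - t (j-1) ≤ C₀ * (t (j-1)) ^ (1/r) * (t j) ^ (1-1/r) := h2
      _ ≤ C₀ * (c ^ (1/r) * (t j) ^ (1/r)) * (t j) ^ (1-1/r) := by
          rw [hsplit] at h3
          exact mul_le_mul_of_nonneg_right (mul_le_mul_of_nonneg_left h3 hC₀.le) hpow
      _ = C₀ * c ^ (1/r) * ((t j) ^ (1/r) * (t j) ^ (1-1/r)) := by ring
      _ = C₀ * c ^ (1/r) * t j := by rw [hcomb]
      _ ≤ (1/2) * t j := mul_le_mul_of_nonneg_right hcr htjpos.le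
  nlinarith [mul_le_mul_of_nonneg_right hc4 htjpos.le]
end

section
/- (Comparison principle for the discrete operator.) Let α ∈ (0,1) and λ0, λ1 ≥ 0, and let the mesh satisfy λ0·τ_j^α < 1/Γ(2−α) for all 1 ≤ j ≤ M. If a sequence (V^m)_{m=0}^M satisfies V^0 ≤ 0 and δ^α V^m − λ0 V^m − λ1 V^{m−1} ≤ 0 for all 1 ≤ m ≤ M, then V^m ≤ 0 for all 0 ≤ m ≤ M. -/
lemma intcomp {α a b c : ℝ} (hα1 : α < 1) :
    (∫ s in a..b, (c - s) ^ (-α)) = ((c - a) ^ (1 - α) - (c - b) ^ (1 - α)) / (1 - α) := by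
  rw [intervalIntegral.integral_comp_sub_left (fun u => u ^ (-α)) c]
  rw [integral_rpow (Or.inl (by linarith))]
  ring_nf

lemma abelC : ∀ (n : ℕ) (c V : ℕ → ℝ), 1 ≤ n →
    (∀ j, 1 ≤ j → j < n → c j ≤ c (j+1)) →
    (∀ j, j < n → V j ≤ 0) → 0 ≤ c 1 →
    c n * V n ≤ ∑ j ∈ Finset.Icc 1 n, c j * (V j - V (j-1)) := by
  intro n
  induction n with
  | zero => intro c V h; omega
  | succ n ih =>
    intro c V _ hc hVle hc1
    rcases Nat.eq_zero_or_pos n with rfl | hn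
    · simp only [Finset.Icc_self, Finset.sum_singleton]
      have := hVle 0 (by norm_num)
      nlinarith
    · rw [Finset.sum_Icc_succ_top (by omega : 1 ≤ n+1)]
      have h1 := ih c V hn (fun j hj hj' => hc j hj (by omega))
        (fun j hj => hVle j (by omega)) hc1
      have h2 : c n ≤ c (n+1) := hc n hn (by omega)
      have h3 : V n ≤ 0 := hVle n (by omega)
      have he : (n+1) - 1 = n := rfl
      rw [he]
      nlinarith

/-- The L1 discrete fractional-derivative operator on the mesh `t`. -/
noncomputable def l1 (α : ℝ) (t : ℕ → ℝ) (V : ℕ → ℝ) (m : ℕ) : ℝ :=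
  (1 / Real.Gamma (1 - α)) * ∑ j ∈ Finset.Icc 1 m,
    ((V j - V (j - 1)) / (t j - t (j - 1))) *
      ∫ s in (t (j - 1))..(t j), (t m - s) ^ (-α)

/-- comparison principle for the discrete operator
`δ^α − lam0 − lam1`: if `V^0 ≤ 0` and `δ^α V^m − lam0 V^m − lam1 V^{m−1} ≤ 0`
for all `1 ≤ m ≤ M`, then `V^m ≤ 0` for all `m ≤ M`. -/
theorem stmt2 (α lam0 lam1 : ℝ) (hα : α ∈ Set.Ioo (0:ℝ) 1)
    (hlam0 : 0 ≤ lam0) (hlam1 : 0 ≤ lam1)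
    (T : ℝ) (hT : 0 < T) (M : ℕ) (t : ℕ → ℝ) (ht0 : t 0 = 0) (htT : t M = T)
    (hmono : ∀ j, 1 ≤ j → j ≤ M → t (j - 1) < t j)
    (htau : ∀ j, 1 ≤ j → j ≤ M →
      lam0 * (t j - t (j - 1)) ^ α < 1 / Real.Gamma (2 - α))
    (V : ℕ → ℝ) (hV0 : V 0 ≤ 0)
    (hV : ∀ m, 1 ≤ m → m ≤ M → l1 α t V m - lam0 * V m - lam1 * V (m - 1) ≤ 0) :
    ∀ m, m ≤ M → V m ≤ 0 := by
  obtain ⟨hα0, hα1⟩ := hα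
  have hG1 : 0 < Real.Gamma (1 - α) := Real.Gamma_pos_of_pos (by linarith)
  have hG2 : Real.Gamma (2 - α) = (1 - α) * Real.Gamma (1 - α) := by
    have : (2 : ℝ) - α = (1 - α) + 1 := by ring
    rw [this, Real.Gamma_add_one (by linarith)]
  have hG2pos : 0 < Real.Gamma (2 - α) := by
    rw [hG2]; exact mul_pos (by linarith) hG1
  -- monotonicity of the mesh
  have tmono : ∀ i j : ℕ, i ≤ j → j ≤ M → t i ≤ t j := by
    intro i j hij hjM
    induction j with
    | zero => have : i = 0 := by omega
              simp [this]
    | succ k ihk =>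
      have hk : t k < t (k+1) := by
        have := hmono (k+1) (by omega) hjM
        simpa using this
      rcases Nat.eq_or_lt_of_le hij with h | h
      · exact le_of_eq (by rw [h])
      · exact le_trans (ihk (by omega) (by omega)) hk.le
  -- strong induction on m
  intro m
  induction m using Nat.strong_induction_on with
  | _ m ih =>
    intro hmM
    rcases Nat.eq_zero_or_pos m with rfl | hm1
    · exact hV0
    -- coefficients
    set c : ℕ → ℝ := fun j =>
      ((t m - t (j-1)) ^ (1-α) - (t m - t j) ^ (1-α)) / (t j - t (j-1)) with hc_def
    have htau_pos : ∀ j, 1 ≤ j → j ≤ M → 0 < t j - t (j-1) := by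
      intro j h1 h2; have := hmono j h1 h2; linarith
    -- rewrite l1
    have hl1 : l1 α t V m
        = (1 / Real.Gamma (2 - α)) * ∑ j ∈ Finset.Icc 1 m, c j * (V j - V (j-1)) := by
      rw [l1, Finset.mul_sum, Finset.mul_sum]
      apply Finset.sum_congr rfl
      intro j hj
      rw [Finset.mem_Icc] at hj
      have hτ := htau_pos j hj.1 (le_trans hj.2 hmM)
      rw [intcomp hα1]
      rw [hG2]
      have h1α : (1:ℝ) - α ≠ 0 := by linarith
      simp only [hc_def]
      field_simp [hτ.ne']
    -- slope monotonicity : c j ≤ c (j+1) for 1 ≤ j < m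
    have hcmono : ∀ j, 1 ≤ j → j < m → c j ≤ c (j+1) := by
      intro j h1 h2
      have hjM : j ≤ M := by omega
      have hj1M : j + 1 ≤ M := by omega
      set u := t m - t (j+1) with hu
      set v := t m - t j with hv
      set w := t m - t (j-1) with hw
      have huv : u < v := by
        have := hmono (j+1) (by omega) hj1M
        simp only [hu, hv, Nat.add_sub_cancel] at *
        linarith
      have hvw : v < w := by
        have := hmono j h1 hjM; simp only [hv, hw]; linarith
      have hu0 : 0 ≤ u := by
        have := tmono (j+1) m h2 hmM; simp [hu]; linarith
      have hw0 : 0 ≤ w := le_trans hu0 (le_trans huv.le hvw.le)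
      have key := (Real.concaveOn_rpow (by linarith : (0:ℝ) ≤ 1 - α)
        (by linarith : (1:ℝ) - α ≤ 1)).slope_anti_adjacent
        (Set.mem_Ici.2 hu0) (Set.mem_Ici.2 hw0) huv hvw
      -- key : (w^(1-α) - v^(1-α))/(w - v) ≤ (v^(1-α) - u^(1-α))/(v - u)
      have e1 : c j = (w ^ (1-α) - v ^ (1-α)) / (w - v) := by
        simp only [hc_def, hv, hw]; congr 1; ring
      have e2 : c (j+1) = (v ^ (1-α) - u ^ (1-α)) / (v - u) := by
        simp only [hc_def, hu, hv, Nat.add_sub_cancel]; congr 1; ring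
      rw [e1, e2]; exact key
    -- nonnegativity of c 1
    have hc1 : 0 ≤ c 1 := by
      have hτ := htau_pos 1 le_rfl (by omega)
      have h1 : t 1 ≤ t m := tmono 1 m hm1 hmM
      have h0 : t 0 ≤ t 1 := tmono 0 1 (by omega) (by omega)
      apply div_nonneg _ hτ.le
      have : (t m - t 1) ^ (1-α) ≤ (t m - t 0) ^ (1-α) :=
        Real.rpow_le_rpow (by simp; linarith) (by simp; linarith) (by linarith)
      simpa using sub_nonneg.2 this
    have hVprev : ∀ j, j < m → V j ≤ 0 := fun j hj => ih j hj (by omega)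
    have hS := abelC m c V hm1 hcmono hVprev hc1
    -- value of c m
    have hτm := htau_pos m hm1 hmM
    have hcm : c m = (t m - t (m-1)) ^ (-α) := by
      simp only [hc_def, sub_self, Real.zero_rpow (by linarith : (1:ℝ) - α ≠ 0), sub_zero]
      rw [show (1:ℝ) - α = 1 + (-α) by ring, Real.rpow_add hτm, Real.rpow_one]
      field_simp
    have hVineq := hV m hm1 hmM
    rw [hl1] at hVineq
    have hKpos : 0 < 1 / Real.Gamma (2 - α) := by positivity
    have hstep : (1 / Real.Gamma (2 - α)) * (c m * V m) - lam0 * V m ≤ 0 := by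
      have hVm1 : V (m-1) ≤ 0 := hVprev (m-1) (by omega)
      nlinarith [mul_le_mul_of_nonneg_left hS hKpos.le]
    -- compare coefficients
    have hcoef : lam0 < (1 / Real.Gamma (2 - α)) * c m := by
      have ht := htau m hm1 hmM
      have hpow : 0 < (t m - t (m-1)) ^ α := Real.rpow_pos_of_pos hτm α
      rw [hcm, Real.rpow_neg hτm.le]
      rw [div_mul_eq_mul_div, one_mul, lt_div_iff₀ hG2pos]
      calc lam0 * Real.Gamma (2 - α)
          = (lam0 * (t m - t (m-1)) ^ α) * Real.Gamma (2-α) * ((t m - t (m-1)) ^ α)⁻¹ := by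
            field_simp
        _ < (1 / Real.Gamma (2-α)) * Real.Gamma (2-α) * ((t m - t (m-1)) ^ α)⁻¹ := by
            apply mul_lt_mul_of_pos_right _ (by positivity)
            exact mul_lt_mul_of_pos_right ht hG2pos
        _ = ((t m - t (m-1)) ^ α)⁻¹ := by field_simp
    nlinarith
end

section
/- (Existence of a discrete barrier.) Let α ∈ (0,1), λ ≥ 0, and let c₀ > 0 satisfy λ·Γ(2−α)·(2c₀)^α < 1. Fix a mesh point t_m with 0 ≤ t_m ≤ T and suppose τ_j ≤ c₀/2 for all 1 ≤ j ≤ M. Then there exists a nondecreasing sequence (B^j)_{j=0}^M and a constant C > 0 depending only on α, λ, c₀, and T, such that 0 ≤ B^j ≤ C for all j, B^j = 0 for all j ≤ m, and δ^α B^j − λ B^j ≥ Q^j for all 1 ≤ j ≤ M, where Q^j := 0 if t_j < t_m + c₀ and Q^j := 1 if t_j ≥ t_m + c₀. -/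
open Finset

private lemma tele_sum (g : ℕ → ℝ) {b n : ℕ} (h : b ≤ n) :
    ∑ j ∈ Finset.Ioc b n, (g (j - 1) - g j) = g b - g n := by
  induction n, h using Nat.le_induction with
  | base => simp
  | succ n hbn ih =>
    rw [Finset.sum_Ioc_succ_top hbn, ih]
    have h2 : n + 1 - 1 = n := rfl
    rw [h2]; ring

private lemma integ_val {α : ℝ} (hα0 : -1 < -α) (c a b : ℝ) :
    ∫ s in a..b, (c - s) ^ (-α) = ((c - a) ^ (1 - α) - (c - b) ^ (1 - α)) / (1 - α) := by
  rw [intervalIntegral.integral_comp_sub_left (fun x : ℝ => x ^ (-α)) c,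
    integral_rpow (Or.inl hα0)]
  rw [show -α + 1 = 1 - α by ring]

set_option maxHeartbeats 1000000 in
/-- existence of a discrete barrier `B` with `B^j = 0` for `j ≤ m`,
`0 ≤ B^j ≤ C`, `B` nondecreasing, and `δ^α B^j − λ B^j ≥ Q^j`, where `Q^j = 1`
for `t_j ≥ t_m + c₀` and `Q^j = 0` otherwise. -/
theorem stmt3 (α lam c₀ T : ℝ) (hα : α ∈ Set.Ioo (0:ℝ) 1) (hlam : 0 ≤ lam)
    (hc₀ : 0 < c₀) (hsmall : lam * Real.Gamma (2 - α) * (2 * c₀) ^ α < 1)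
    (hT : 0 < T) :
    ∃ C : ℝ, 0 < C ∧
    ∀ (M : ℕ) (t : ℕ → ℝ), t 0 = 0 → t M = T →
      (∀ j, 1 ≤ j → j ≤ M → t (j - 1) < t j) →
      (∀ j, 1 ≤ j → j ≤ M → t j - t (j - 1) ≤ c₀ / 2) →
      ∀ m : ℕ, m ≤ M →
      ∃ B : ℕ → ℝ,
        (∀ j k, j ≤ k → B j ≤ B k) ∧
        (∀ j, 0 ≤ B j ∧ B j ≤ C) ∧
        (∀ j, j ≤ m → B j = 0) ∧
        (∀ j, 1 ≤ j → j ≤ M →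
          l1 α t B j - lam * B j ≥ (if t j < t m + c₀ then (0:ℝ) else 1)) := by
  classical
  obtain ⟨hα0, hα1⟩ := hα
  have h1α : (0:ℝ) < 1 - α := by linarith
  have hG1 : 0 < Real.Gamma (1 - α) := Real.Gamma_pos_of_pos h1α
  have hG2e : Real.Gamma (2 - α) = (1 - α) * Real.Gamma (1 - α) := by
    rw [show (2:ℝ) - α = (1 - α) + 1 by ring, Real.Gamma_add_one (ne_of_gt h1α)]
  have hG2 : 0 < Real.Gamma (2 - α) := by rw [hG2e]; positivity
  set θ : ℝ := lam * Real.Gamma (2 - α) * (2 * c₀) ^ α with hθdef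
  have h2c : (0:ℝ) ≤ (2 * c₀) ^ α := Real.rpow_nonneg (by linarith) _
  have hθ0 : 0 ≤ θ := mul_nonneg (mul_nonneg hlam hG2.le) h2c
  have hθ1 : θ < 1 := hsmall
  set G : ℝ := (c₀ / 2) ^ (1 - α) * (1 - θ) / Real.Gamma (2 - α) with hGdef
  have hGpos : 0 < G :=
    div_pos (mul_pos (Real.rpow_pos_of_pos (by linarith) _) (by linarith)) hG2
  set ρ : ℝ := 2 + 2 * lam * T / G with hρdef
  have hρ1 : (1:ℝ) < ρ := by
    have : 0 ≤ 2 * lam * T / G :=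
      div_nonneg (mul_nonneg (by linarith) hT.le) hGpos.le
    rw [hρdef]; linarith
  have hρ0 : (0:ℝ) < ρ := by linarith
  set σ : ℝ := 2 / G with hσdef
  have hσpos : 0 < σ := div_pos two_pos hGpos
  set N : ℕ := Nat.ceil (T / c₀) with hNdef
  refine ⟨σ * T * (N + 1 : ℕ) * ρ ^ N + 1, ?_, ?_⟩
  · have : 0 ≤ σ * T * (N + 1 : ℕ) * ρ ^ N := by
      apply mul_nonneg (mul_nonneg (mul_nonneg hσpos.le hT.le) (by positivity))
      positivity
    linarith
  intro M t ht0 htM hinc hstep m hmM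
  have tmono : ∀ j, j ≤ M → ∀ i, i ≤ j → t i ≤ t j := by
    intro j
    induction j with
    | zero => intro _ i hi; interval_cases i; rfl
    | succ j ih =>
      intro hj i hi
      rcases Nat.lt_or_ge i (j + 1) with h | h
      · have h1 : t i ≤ t j := ih (by omega) i (by omega)
        have h2 : t j < t (j + 1) := by
          have := hinc (j + 1) (by omega) hj
          simpa using this
        linarith
      · have : i = j + 1 := by omega
        rw [this]
  have htpos : ∀ i, i ≤ M → 0 ≤ t i := by
    intro i hi; rw [← ht0]; exact tmono i hi 0 (Nat.zero_le _)
  have htT : ∀ i, i ≤ M → t i ≤ T := by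
    intro i hi; rw [← htM]; exact tmono M le_rfl i hi
  have htm0 : 0 ≤ t m := htpos m hmM
  have htmT : t m ≤ T := htT m hmM
  set s : ℕ → ℝ := fun k => t m + k * c₀ with hsdef
  set S : ℕ → Set ℕ := fun k => {i | i ≤ M ∧ s k ≤ t i} with hSdef
  set w : ℕ → ℝ := fun k => if hk : (S k).Nonempty then t (sInf (S k)) else T + 1 with hwdef
  have hw0 : ∀ k, 0 ≤ w k := by
    intro k
    rw [hwdef]; dsimp only
    split
    · next hk => exact htpos _ (Nat.sInf_mem hk).1
    · linarith
  have hws : ∀ k, (S k).Nonempty → s k ≤ w k ∧ w k ≤ T ∧ sInf (S k) ≤ M := by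
    intro k hk
    have hmem := Nat.sInf_mem hk
    rw [hwdef]; dsimp only
    rw [dif_pos hk]
    exact ⟨hmem.2, htT _ hmem.1, hmem.1⟩
  have hsk : ∀ k, t m ≤ s k := by
    intro k
    rw [hsdef]; dsimp only
    have : (0:ℝ) ≤ (k:ℝ) * c₀ := mul_nonneg (Nat.cast_nonneg _) hc₀.le
    linarith
  have hwm : ∀ k, t m ≤ w k := by
    intro k
    by_cases hk : (S k).Nonempty
    · exact le_trans (hsk k) (hws k hk).1
    · rw [hwdef]; dsimp only; rw [dif_neg hk]; linarith
  set r : ℕ → ℕ → ℝ := fun k j => max (t (min j M) - w k) 0 with hrdef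
  set B : ℕ → ℝ := fun j => σ * ∑ k ∈ Finset.range (N + 1), ρ ^ k * r k j with hBdef
  have hSmem : ∀ k i, i ∈ S k ↔ (i ≤ M ∧ s k ≤ t i) := by
    intro k i
    rw [hSdef]
    exact Iff.rfl
  have hr0 : ∀ k j, 0 ≤ r k j := fun k j => le_max_right _ _
  have hrT : ∀ k j, r k j ≤ T := by
    intro k j
    apply max_le _ hT.le
    have h1 := htT (min j M) (min_le_right _ _)
    have h2 := hw0 k
    linarith
  refine ⟨B, ?_, ?_, ?_, ?_⟩
  · -- monotone
    intro j k hjk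
    rw [hBdef]; dsimp only
    apply mul_le_mul_of_nonneg_left _ hσpos.le
    apply Finset.sum_le_sum
    intro i _
    apply mul_le_mul_of_nonneg_left _ (pow_pos hρ0 i).le
    rw [hrdef]; dsimp only
    apply max_le_max _ le_rfl
    apply sub_le_sub_right
    exact tmono (min k M) (min_le_right _ _) (min j M) (by omega)
  · -- bounds
    intro j
    constructor
    · rw [hBdef]; dsimp only
      apply mul_nonneg hσpos.le
      apply Finset.sum_nonneg
      intro i _
      exact mul_nonneg (pow_pos hρ0 i).le (hr0 i j)
    · rw [hBdef]; dsimp only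
      have hsum : ∑ k ∈ Finset.range (N + 1), ρ ^ k * r k j
          ≤ (N + 1 : ℕ) * (ρ ^ N * T) := by
        calc ∑ k ∈ Finset.range (N + 1), ρ ^ k * r k j
            ≤ ∑ _k ∈ Finset.range (N + 1), ρ ^ N * T := by
              apply Finset.sum_le_sum
              intro i hi
              have hiN : i ≤ N := by
                have := Finset.mem_range.mp hi; omega
              apply mul_le_mul (pow_le_pow_right₀ (by linarith) hiN) (hrT i j)
                (hr0 i j) (by positivity)
          _ = (N + 1 : ℕ) * (ρ ^ N * T) := by
              rw [Finset.sum_const, Finset.card_range, nsmul_eq_mul]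
      have := mul_le_mul_of_nonneg_left hsum hσpos.le
      nlinarith [this]
  · -- zero up to m
    intro j hj
    rw [hBdef]; dsimp only
    have hz : ∀ k ∈ Finset.range (N + 1), ρ ^ k * r k j = 0 := by
      intro k _
      have hjM : min j M = j := by omega
      rw [hrdef]; dsimp only
      rw [hjM]
      have h1 : t j ≤ t m := tmono m hmM j hj
      have h2 := hwm k
      rw [max_eq_right (by linarith)]
      ring
    rw [Finset.sum_eq_zero hz, mul_zero]
  · -- main inequality
    intro n hn1 hnM
    have hminn : min n M = n := by omega
    -- per-ramp exact L1 value
    have hval : ∀ k, l1 α t (r k) n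
        = (max (t n - w k) 0) ^ (1 - α) / Real.Gamma (2 - α) := by
      intro k
      by_cases hc : w k ≤ t n
      · have hne : (S k).Nonempty := by
          by_contra hk
          rw [hwdef] at hc; dsimp only at hc; rw [dif_neg hk] at hc
          have := htT n hnM; linarith
        obtain ⟨hswk, hwkT, hbM⟩ := hws k hne
        have hwk : w k = t (sInf (S k)) := by
          rw [hwdef]; dsimp only; rw [dif_pos hne]
        set b := sInf (S k) with hbdef
        have hbmem : b ∈ S k := Nat.sInf_mem hne
        have hbM' : b ≤ M := ((hSmem _ _).mp hbmem).1
        have hsb : s k ≤ t b := ((hSmem _ _).mp hbmem).2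
        have hbn : b ≤ n :=
          Nat.sInf_le ((hSmem _ _).mpr ⟨hnM, by rw [hwk] at hc; linarith⟩)
        unfold l1
        rw [show Finset.Icc 1 n = Finset.Ioc 0 n from by rw [← Finset.Icc_add_one_left_eq_Ioc]; rfl]
        rw [← Finset.sum_Ioc_consecutive _ (Nat.zero_le b) hbn]
        have hz : ∑ j ∈ Finset.Ioc 0 b,
            ((r k j - r k (j - 1)) / (t j - t (j - 1))) *
              ∫ x in (t (j - 1))..(t j), (t n - x) ^ (-α) = 0 := by
          apply Finset.sum_eq_zero
          intro j hj
          obtain ⟨hj1, hjb⟩ := Finset.mem_Ioc.mp hj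
          have e1 : r k j = 0 := by
            rw [hrdef]; dsimp only
            have h1 : min j M = j := by omega
            rw [h1, max_eq_right]
            have h2 : t j ≤ t b := tmono b hbM' j hjb
            rw [hwk]; linarith
          have e2 : r k (j - 1) = 0 := by
            rw [hrdef]; dsimp only
            have h1 : min (j - 1) M = j - 1 := by omega
            rw [h1, max_eq_right]
            have h2 : t (j - 1) ≤ t b := tmono b hbM' (j - 1) (by omega)
            rw [hwk]; linarith
          rw [e1, e2]
          ring
        rw [hz, zero_add]
        have hmain : ∑ j ∈ Finset.Ioc b n,
            ((r k j - r k (j - 1)) / (t j - t (j - 1))) *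
              ∫ x in (t (j - 1))..(t j), (t n - x) ^ (-α)
            = ∑ j ∈ Finset.Ioc b n,
              (((t n - t (j - 1)) ^ (1 - α) - (t n - t j) ^ (1 - α)) / (1 - α)) := by
          apply Finset.sum_congr rfl
          intro j hj
          obtain ⟨hjb, hjn⟩ := Finset.mem_Ioc.mp hj
          have hj1 : 1 ≤ j := by omega
          have hjM : j ≤ M := by omega
          have hτ : 0 < t j - t (j - 1) := sub_pos.2 (hinc j hj1 hjM)
          have e1 : r k j = t j - t b := by
            rw [hrdef]; dsimp only
            have h1 : min j M = j := by omega
            rw [h1, max_eq_left]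
            · rw [hwk]
            · have h2 : t b ≤ t j := tmono j hjM b (by omega)
              rw [hwk]; linarith
          have e2 : r k (j - 1) = t (j - 1) - t b := by
            rw [hrdef]; dsimp only
            have h1 : min (j - 1) M = j - 1 := by omega
            rw [h1, max_eq_left]
            · rw [hwk]
            · have h2 : t b ≤ t (j - 1) := tmono (j - 1) (by omega) b (by omega)
              rw [hwk]; linarith
          rw [e1, e2]
          rw [show t j - t b - (t (j - 1) - t b) = t j - t (j - 1) by ring]
          rw [div_self (ne_of_gt hτ), one_mul]
          exact integ_val (by linarith) (t n) (t (j - 1)) (t j)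
        rw [hmain, ← Finset.sum_div, tele_sum (fun i => (t n - t i) ^ (1 - α)) hbn]
        rw [sub_self, Real.zero_rpow (ne_of_gt h1α), sub_zero]
        rw [max_eq_left (by rw [hwk] at hc ⊢; linarith), hwk, hG2e]
        rw [one_div, inv_mul_eq_div, div_div]
      · push_neg at hc
        unfold l1
        have hz : ∀ j ∈ Finset.Icc 1 n,
            ((r k j - r k (j - 1)) / (t j - t (j - 1))) *
              ∫ x in (t (j - 1))..(t j), (t n - x) ^ (-α) = 0 := by
          intro j hj
          obtain ⟨hj1, hjn⟩ := Finset.mem_Icc.mp hj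
          have e1 : r k j = 0 := by
            rw [hrdef]; dsimp only
            have h1 : min j M = j := by omega
            rw [h1, max_eq_right]
            have h2 : t j ≤ t n := tmono n hnM j hjn
            linarith
          have e2 : r k (j - 1) = 0 := by
            rw [hrdef]; dsimp only
            have h1 : min (j - 1) M = j - 1 := by omega
            rw [h1, max_eq_right]
            have h2 : t (j - 1) ≤ t n := tmono n hnM (j - 1) (by omega)
            linarith
          rw [e1, e2]
          ring
        rw [Finset.sum_eq_zero hz, mul_zero]
        rw [max_eq_right (by linarith), Real.zero_rpow (ne_of_gt h1α), zero_div]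
    -- linearity
    have key : ∀ j, ((B j - B (j - 1)) / (t j - t (j - 1))) *
          (∫ x in (t (j - 1))..(t j), (t n - x) ^ (-α))
        = ∑ k ∈ Finset.range (N + 1), σ * (ρ ^ k *
          (((r k j - r k (j - 1)) / (t j - t (j - 1))) *
            ∫ x in (t (j - 1))..(t j), (t n - x) ^ (-α))) := by
      intro j
      have e : B j - B (j - 1)
          = ∑ k ∈ Finset.range (N + 1), σ * (ρ ^ k * (r k j - r k (j - 1))) := by
        rw [hBdef]; dsimp only
        rw [Finset.mul_sum, Finset.mul_sum, ← Finset.sum_sub_distrib]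
        apply Finset.sum_congr rfl
        intro k _
        ring
      rw [e, Finset.sum_div, Finset.sum_mul]
      apply Finset.sum_congr rfl
      intro k _
      ring
    have hlin : l1 α t B n = σ * ∑ k ∈ Finset.range (N + 1), ρ ^ k * l1 α t (r k) n := by
      unfold l1
      calc (1 / Real.Gamma (1 - α)) * ∑ j ∈ Finset.Icc 1 n,
            ((B j - B (j - 1)) / (t j - t (j - 1))) *
              ∫ x in (t (j - 1))..(t j), (t n - x) ^ (-α)
          = (1 / Real.Gamma (1 - α)) * ∑ j ∈ Finset.Icc 1 n,
            ∑ k ∈ Finset.range (N + 1), σ * (ρ ^ k *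
              (((r k j - r k (j - 1)) / (t j - t (j - 1))) *
                ∫ x in (t (j - 1))..(t j), (t n - x) ^ (-α))) := by
            congr 1
            exact Finset.sum_congr rfl fun j _ => key j
        _ = σ * ∑ k ∈ Finset.range (N + 1), ρ ^ k *
              ((1 / Real.Gamma (1 - α)) * ∑ j ∈ Finset.Icc 1 n,
                ((r k j - r k (j - 1)) / (t j - t (j - 1))) *
                  ∫ x in (t (j - 1))..(t j), (t n - x) ^ (-α)) := by
            simp only [Finset.mul_sum]
            rw [Finset.sum_comm]
            apply Finset.sum_congr rfl
            intro k _
            apply Finset.sum_congr rfl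
            intro j _
            ring
    have hBn : B n = σ * ∑ k ∈ Finset.range (N + 1), ρ ^ k * max (t n - w k) 0 := by
      rw [hBdef]; dsimp only
      congr 1
      apply Finset.sum_congr rfl
      intro k _
      rw [hrdef]; dsimp only
      rw [hminn]
    set u : ℕ → ℝ := fun k => max (t n - w k) 0 with hudef
    set X : ℕ → ℝ := fun k => (u k) ^ (1 - α) / Real.Gamma (2 - α) - lam * u k with hXdef
    have hmain : l1 α t B n - lam * B n = σ * ∑ k ∈ Finset.range (N + 1), ρ ^ k * X k := by
      rw [hlin, hBn]
      have e : lam * (σ * ∑ k ∈ Finset.range (N + 1), ρ ^ k * max (t n - w k) 0)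
          = σ * ∑ k ∈ Finset.range (N + 1), ρ ^ k * (lam * max (t n - w k) 0) := by
        simp only [Finset.mul_sum]
        apply Finset.sum_congr rfl
        intro k _
        ring
      rw [e, ← mul_sub, ← Finset.sum_sub_distrib]
      congr 1
      apply Finset.sum_congr rfl
      intro k _
      rw [hval k, hXdef, hudef]
      dsimp only
      ring
    have hu0 : ∀ k, 0 ≤ u k := fun k => le_max_right _ _
    have hclaim : ∀ k, u k ≤ 2 * c₀ →
        (1 - θ) * (u k) ^ (1 - α) / Real.Gamma (2 - α) ≤ X k := by
      intro k h2
      have hu := hu0 k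
      have hkey : lam * u k ≤ θ * (u k) ^ (1 - α) / Real.Gamma (2 - α) := by
        have e : u k = u k ^ α * u k ^ (1 - α) := by
          rw [← Real.rpow_add_of_nonneg hu hα0.le h1α.le]
          norm_num
        have h4 : u k ^ α ≤ (2 * c₀) ^ α := Real.rpow_le_rpow hu h2 hα0.le
        calc lam * u k = lam * (u k ^ α * u k ^ (1 - α)) := by rw [← e]
          _ ≤ lam * ((2 * c₀) ^ α * u k ^ (1 - α)) := by
              apply mul_le_mul_of_nonneg_left _ hlam
              exact mul_le_mul_of_nonneg_right h4 (Real.rpow_nonneg hu _)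
          _ = θ * (u k) ^ (1 - α) / Real.Gamma (2 - α) := by
              rw [hθdef]; field_simp
      have e2 : (1 - θ) * (u k) ^ (1 - α) / Real.Gamma (2 - α)
          = (u k) ^ (1 - α) / Real.Gamma (2 - α)
            - θ * (u k) ^ (1 - α) / Real.Gamma (2 - α) := by ring
      rw [e2, hXdef]
      dsimp only
      linarith
    have hXnn : ∀ k, u k ≤ 2 * c₀ → 0 ≤ X k := by
      intro k h2
      refine le_trans ?_ (hclaim k h2)
      have h3 : (0:ℝ) ≤ (u k) ^ (1 - α) := Real.rpow_nonneg (hu0 k) _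
      apply div_nonneg _ hG2.le
      exact mul_nonneg (by linarith) h3
    by_cases hQ : t n < t m + c₀
    · rw [if_pos hQ, ge_iff_le, hmain]
      apply mul_nonneg hσpos.le
      apply Finset.sum_nonneg
      intro k _
      apply mul_nonneg (pow_pos hρ0 k).le
      apply hXnn
      have h1 : t n - w k ≤ 2 * c₀ := by
        have := hwm k; linarith
      exact max_le h1 (by linarith)
    · rw [if_neg hQ]
      push_neg at hQ
      set d : ℝ := t n - t m with hddef
      have hd : c₀ ≤ d := by rw [hddef]; linarith
      have hdT : d ≤ T := by
        have := htT n hnM; rw [hddef]; linarith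
      set K : ℕ := Nat.floor (d / c₀) with hKdef
      have hK1 : 1 ≤ K := by
        rw [hKdef]
        apply Nat.le_floor
        rw [Nat.cast_one, le_div_iff₀ hc₀]
        linarith
      have hKle : (K : ℝ) * c₀ ≤ d := by
        have h1 : (K : ℝ) ≤ d / c₀ := Nat.floor_le (div_nonneg (by linarith) hc₀.le)
        calc (K : ℝ) * c₀ ≤ (d / c₀) * c₀ := by
              exact mul_le_mul_of_nonneg_right h1 hc₀.le
          _ = d := by field_simp
      have hdlt : d < ((K : ℝ) + 1) * c₀ := by
        have h1 : d / c₀ < (K : ℝ) + 1 := Nat.lt_floor_add_one (d / c₀)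
        calc d = (d / c₀) * c₀ := by field_simp
          _ < ((K : ℝ) + 1) * c₀ := by exact mul_lt_mul_of_pos_right h1 hc₀
      have hKN : K ≤ N := by
        have h1 : (K : ℝ) ≤ T / c₀ := by
          rw [le_div_iff₀ hc₀]; linarith
        have h2 : (T / c₀ : ℝ) ≤ (N : ℝ) := by rw [hNdef]; exact Nat.le_ceil _
        exact_mod_cast le_trans h1 h2
      set k₀ : ℕ := K - 1 with hk₀def
      have hk₀K : k₀ + 1 = K := by omega
      have hk₀N : k₀ < N + 1 := by omega
      have hcast : (k₀ : ℝ) = (K : ℝ) - 1 := by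
        have h : (k₀ : ℝ) + 1 = (K : ℝ) := by exact_mod_cast hk₀K
        linarith
      have hsk₀ : s k₀ ≤ t n - c₀ := by
        rw [hsdef]; dsimp only
        rw [hcast]
        have e2 : t m + ((K:ℝ) - 1) * c₀ = t m + (K:ℝ) * c₀ - c₀ := by ring
        rw [e2]
        have h3 : d = t n - t m := hddef
        linarith
      have hne : (S k₀).Nonempty := ⟨n, (hSmem _ _).mpr ⟨hnM, by linarith⟩⟩
      obtain ⟨hsw, hwT', hbM'⟩ := hws k₀ hne
      have hwk : w k₀ = t (sInf (S k₀)) := by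
        rw [hwdef]; dsimp only; rw [dif_pos hne]
      have hwlow : w k₀ ≤ t n - c₀ / 2 := by
        rw [hwk]
        rcases Nat.eq_zero_or_pos (sInf (S k₀)) with hb0 | hb1
        · rw [hb0, ht0]; linarith
        · have hnotin : sInf (S k₀) - 1 ∉ S k₀ := fun hmem => by
            have := Nat.sInf_le hmem; omega
          have h5 : t (sInf (S k₀) - 1) < s k₀ := by
            by_contra h6
            push_neg at h6
            exact hnotin ((hSmem _ _).mpr ⟨by omega, h6⟩)
          have h7 := hstep (sInf (S k₀)) (by omega) hbM'
          linarith
      have hu_lb : c₀ / 2 ≤ u k₀ := by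
        refine le_trans ?_ (le_max_left _ _)
        linarith
      have hu_ub : u k₀ ≤ 2 * c₀ := by
        apply max_le _ (by linarith)
        have h1 : s k₀ ≤ w k₀ := hsw
        have h2 : t m + ((K:ℝ) - 1) * c₀ ≤ w k₀ := by
          rw [hsdef] at h1; dsimp only at h1; rw [hcast] at h1; exact h1
        have : t n = t m + d := by rw [hddef]; ring
        rw [this]
        linarith
      have hXk₀ : G ≤ X k₀ := by
        have h9 : (c₀ / 2) ^ (1 - α) ≤ (u k₀) ^ (1 - α) :=
          Real.rpow_le_rpow (by linarith) hu_lb h1α.le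
        have h10 : (c₀ / 2) ^ (1 - α) * (1 - θ) ≤ (1 - θ) * (u k₀) ^ (1 - α) := by
          rw [mul_comm]
          exact mul_le_mul_of_nonneg_left h9 (by linarith)
        have h11 : G ≤ (1 - θ) * (u k₀) ^ (1 - α) / Real.Gamma (2 - α) := by
          rw [hGdef]
          exact (div_le_div_iff_of_pos_right hG2).mpr h10
        exact le_trans h11 (hclaim k₀ hu_ub)
      -- nonneg for k in [k₀, N]
      have hXge : ∀ k, k₀ ≤ k → 0 ≤ X k := by
        intro k hk
        rcases eq_or_lt_of_le hk with hk' | hk'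
        · rw [← hk']; linarith
        · apply hXnn
          apply max_le _ (by linarith)
          by_cases hke : (S k).Nonempty
          · have h1 := (hws k hke).1
            have h2 : (K:ℝ) ≤ (k:ℝ) := by
              have : K ≤ k := by omega
              exact_mod_cast this
            have h3 : t m + (K:ℝ) * c₀ ≤ s k := by
              rw [hsdef]; dsimp only
              have : (K:ℝ) * c₀ ≤ (k:ℝ) * c₀ := mul_le_mul_of_nonneg_right h2 hc₀.le
              linarith
            have h4 : t n = t m + d := by rw [hddef]; ring
            rw [h4]
            linarith
          · have : w k = T + 1 := by
              rw [hwdef]; dsimp only; rw [dif_neg hke]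
            rw [this]
            have := htT n hnM
            linarith
      have hXlbAll : ∀ k, -(lam * T) ≤ X k := by
        intro k
        have huT : u k ≤ T := by
          apply max_le _ hT.le
          have := hw0 k
          have := htT n hnM
          linarith
        have h1 : lam * u k ≤ lam * T := mul_le_mul_of_nonneg_left huT hlam
        have h2 : 0 ≤ (u k) ^ (1 - α) / Real.Gamma (2 - α) :=
          div_nonneg (Real.rpow_nonneg (hu0 k) _) hG2.le
        rw [hXdef]; dsimp only
        linarith
      have hsplit : ∑ k ∈ Finset.range (N + 1), ρ ^ k * X k
          = (∑ k ∈ Finset.Ico 0 k₀, ρ ^ k * X k)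
            + ∑ k ∈ Finset.Ico k₀ (N + 1), ρ ^ k * X k := by
        rw [Finset.range_eq_Ico,
          Finset.sum_Ico_consecutive _ (Nat.zero_le k₀) (by omega)]
      have hgeom : ∑ k ∈ Finset.Ico 0 k₀, (ρ : ℝ) ^ k = (ρ ^ k₀ - 1) / (ρ - 1) := by
        rw [← Finset.range_eq_Ico]
        exact geom_sum_eq (by linarith) k₀
      have hρm : (0:ℝ) < ρ - 1 := by linarith
      have hpart1 : -(lam * T * (ρ ^ k₀ / (ρ - 1))) ≤ ∑ k ∈ Finset.Ico 0 k₀, ρ ^ k * X k := by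
        have step1 : ∑ k ∈ Finset.Ico 0 k₀, ρ ^ k * (-(lam * T))
            ≤ ∑ k ∈ Finset.Ico 0 k₀, ρ ^ k * X k := by
          apply Finset.sum_le_sum
          intro k _
          exact mul_le_mul_of_nonneg_left (hXlbAll k) (pow_pos hρ0 k).le
        refine le_trans ?_ step1
        rw [← Finset.sum_mul, hgeom]
        have h1 : lam * T * ((ρ ^ k₀ - 1) / (ρ - 1)) ≤ lam * T * (ρ ^ k₀ / (ρ - 1)) := by
          apply mul_le_mul_of_nonneg_left _ (mul_nonneg hlam hT.le)
          exact (div_le_div_iff_of_pos_right hρm).mpr (by linarith)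
        have e2 : (ρ ^ k₀ - 1) / (ρ - 1) * (-(lam * T))
            = -(lam * T * ((ρ ^ k₀ - 1) / (ρ - 1))) := by ring
        rw [e2]
        linarith
      have hpart2 : ρ ^ k₀ * G ≤ ∑ k ∈ Finset.Ico k₀ (N + 1), ρ ^ k * X k := by
        have hmem : k₀ ∈ Finset.Ico k₀ (N + 1) := Finset.mem_Ico.mpr ⟨le_rfl, hk₀N⟩
        have step := Finset.single_le_sum (f := fun k => ρ ^ k * X k)
          (fun k hk => mul_nonneg (pow_pos hρ0 k).le (hXge k (Finset.mem_Ico.mp hk).1)) hmem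
        refine le_trans ?_ step
        exact mul_le_mul_of_nonneg_left hXk₀ (pow_pos hρ0 k₀).le
      have hGne : G ≠ 0 := ne_of_gt hGpos
      have h3 : lam * T / G * G = lam * T := div_mul_cancel₀ _ hGne
      have hhalf : lam * T / (ρ - 1) ≤ G / 2 := by
        rw [div_le_iff₀ hρm]
        have e : G / 2 * (ρ - 1) = G / 2 + lam * T := by
          rw [hρdef]; linear_combination h3
        rw [e]; linarith
      have hpk1 : (1:ℝ) ≤ ρ ^ k₀ := by
        have h0 : (1:ℝ) = 1 ^ k₀ := (one_pow k₀).symm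
        rw [h0]
        exact pow_le_pow_left₀ zero_le_one hρ1.le k₀
      have haux : lam * T * (ρ ^ k₀ / (ρ - 1)) ≤ G / 2 * ρ ^ k₀ := by
        have e : lam * T * (ρ ^ k₀ / (ρ - 1)) = (lam * T / (ρ - 1)) * ρ ^ k₀ := by ring
        rw [e]
        exact mul_le_mul_of_nonneg_right hhalf (pow_pos hρ0 k₀).le
      have hmu : 1 * (G / 2) ≤ ρ ^ k₀ * (G / 2) :=
        mul_le_mul_of_nonneg_right hpk1 (by linarith)
      have hr2 : ρ ^ k₀ * G - G / 2 * ρ ^ k₀ = ρ ^ k₀ * (G / 2) := by ring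
      have hSig : G / 2 ≤ ∑ k ∈ Finset.range (N + 1), ρ ^ k * X k := by
        rw [hsplit]
        linarith [hpart1, hpart2, haux, hmu, hr2]
      rw [ge_iff_le, hmain]
      have h11 : σ * (G / 2) ≤ σ * ∑ k ∈ Finset.range (N + 1), ρ ^ k * X k :=
        mul_le_mul_of_nonneg_left hSig hσpos.le
      have e1 : σ * (G / 2) = 1 := by
        rw [hσdef, div_mul_div_comm, mul_comm G 2]
        exact div_self (mul_pos two_pos hGpos).ne'
      linarith
end

section
/- Let α ∈ (0,1), β := 1 − α, and t_n > 0. Define B(s) := s·t_n^{−β−1} for 0 ≤ s ≤ t_n and B(s) := s^{−β} for s ≥ t_n. Then the Caputo derivative ∂^α B(t) = (1/Γ(1−α)) ∫_0^t (t−s)^{−α} B′(s) ds satisfies: Γ(β)·∂^α B(t) ≥ β·(t_n/t)^{α}·t^{−1} for all t > t_n, and Γ(β)·∂^α B(t) ≥ β^{−1}·(t/t_n)^{β}·t_n^{−1} ≥ 0 for all 0 < t ≤ t_n. -/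
open Real Set MeasureTheory intervalIntegral

lemma key_ineq {β : ℝ} (hβ0 : 0 < β) (hβ1 : β < 1) {x : ℝ} (hx0 : 0 ≤ x) (hx1 : x ≤ 1) :
    β * x ^ 2 ≤ (1 - (1 - x) ^ β) / β - x * (1 - x) ^ β := by
  set g : ℝ → ℝ := fun y => (1 - (1 - y) ^ β) / β - y * (1 - y) ^ β - β * y ^ 2 with hg
  have hder : ∀ y ∈ Ioo (0:ℝ) 1, HasDerivAt g
      ((β * (1 - y) ^ (β - 1) * (0 - 1)) / -β -
        ((1 : ℝ) * (1 - y) ^ β + y * (β * (1 - y) ^ (β - 1) * (0 - 1))) - β * (2 * y)) y := by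
    intro y hy
    have hy1 : (0:ℝ) < 1 - y := by linarith [hy.2]
    have h1 : HasDerivAt (fun y : ℝ => 1 - y) (0 - 1) y :=
      (hasDerivAt_const y (1:ℝ)).sub (hasDerivAt_id y)
    have h2 : HasDerivAt (fun y : ℝ => (1 - y) ^ β) (β * (1 - y) ^ (β - 1) * (0 - 1)) y :=
      (Real.hasDerivAt_rpow_const (Or.inl hy1.ne')).comp y h1
    have h3 : HasDerivAt (fun y : ℝ => (1 - (1 - y) ^ β) / β)
        ((β * (1 - y) ^ (β - 1) * (0 - 1)) / -β) y := by
      have := ((hasDerivAt_const y (1:ℝ)).sub h2).div_const β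
      convert this using 1
      · rfl
      · rfl
      · rfl
      · rw [div_neg]; ring
    have h4 : HasDerivAt (fun y : ℝ => y * (1 - y) ^ β)
        ((1 : ℝ) * (1 - y) ^ β + y * (β * (1 - y) ^ (β - 1) * (0 - 1))) y :=
      (hasDerivAt_id y).mul h2
    have h5 : HasDerivAt (fun y : ℝ => β * y ^ 2) (β * (2 * y)) y := by
      simpa using ((hasDerivAt_pow 2 y).const_mul β)
    exact (h3.sub h4).sub h5
  have hmono : MonotoneOn g (Icc (0:ℝ) 1) := by
    apply monotoneOn_of_deriv_nonneg (convex_Icc 0 1)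
    · apply ContinuousOn.sub
      apply ContinuousOn.sub
      · apply ContinuousOn.div_const
        apply ContinuousOn.sub continuousOn_const
        intro y _
        exact ((Real.continuousAt_rpow_const _ _ (Or.inr hβ0.le)).comp
          (by fun_prop : ContinuousAt (fun y : ℝ => 1 - y) y)).continuousWithinAt
      · apply ContinuousOn.mul continuousOn_id
        intro y _
        exact ((Real.continuousAt_rpow_const _ _ (Or.inr hβ0.le)).comp
          (by fun_prop : ContinuousAt (fun y : ℝ => 1 - y) y)).continuousWithinAt
      · fun_prop
    · rw [interior_Icc]
      intro y hy
      exact ((hder y hy).differentiableAt).differentiableWithinAt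
    · rw [interior_Icc]
      intro y hy
      rw [(hder y hy).deriv]
      have hy1 : (0:ℝ) < 1 - y := by linarith [hy.2]
      have hw : 1 ≤ (1 - y) ^ (β - 1) :=
        Real.one_le_rpow_of_pos_of_le_one_of_nonpos hy1 (by linarith [hy.1]) (by linarith)
      have hsplit : (1 - y) ^ β = (1 - y) ^ (β - 1) * (1 - y) := by
        rw [← Real.rpow_add_one hy1.ne' (β - 1)]; ring_nf
      rw [hsplit]
      have h6 : 0 ≤ y * ((1 + β) * (1 - y) ^ (β - 1) - 2 * β) := by
        apply mul_nonneg hy.1.le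
        nlinarith
      have hβ : β ≠ 0 := hβ0.ne'
      field_simp
      nlinarith [h6]
  have h0 : g 0 ≤ g x := hmono ⟨le_refl 0, zero_le_one⟩ ⟨hx0, hx1⟩ hx0
  have hg0 : g 0 = 0 := by simp [hg]
  have := hg0 ▸ h0
  simp only [hg] at this
  linarith


lemma bar_deriv_lt {β tn : ℝ} (s : ℝ) (hs : s < tn) :
    deriv (fun s : ℝ => if s ≤ tn then s * tn ^ (-β - 1) else s ^ (-β)) s = tn ^ (-β - 1) := by
  have h : (fun s : ℝ => if s ≤ tn then s * tn ^ (-β - 1) else s ^ (-β))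
      =ᶠ[nhds s] (fun s : ℝ => s * tn ^ (-β - 1)) := by
    filter_upwards [Iio_mem_nhds hs] with x hx
    simp [le_of_lt (mem_Iio.mp hx)]
  rw [h.deriv_eq]
  have := ((hasDerivAt_id s).mul_const (tn ^ (-β - 1))).deriv
  simpa using this

lemma bar_deriv_gt {β tn : ℝ} (htn : 0 < tn) (s : ℝ) (hs : tn < s) :
    deriv (fun s : ℝ => if s ≤ tn then s * tn ^ (-β - 1) else s ^ (-β)) s
      = -β * s ^ (-β - 1) := by
  have h : (fun s : ℝ => if s ≤ tn then s * tn ^ (-β - 1) else s ^ (-β))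
      =ᶠ[nhds s] (fun s : ℝ => s ^ (-β)) := by
    filter_upwards [Ioi_mem_nhds hs] with x hx
    simp [not_le.mpr (mem_Ioi.mp hx)]
  rw [h.deriv_eq, Real.deriv_rpow_const s (-β)]

lemma integral_tminus (β t : ℝ) (hβ0 : 0 < β) (a : ℝ) :
    ∫ s in a..t, (t - s) ^ (β - 1) = (t - a) ^ β / β := by
  rw [intervalIntegral.integral_comp_sub_left (fun s : ℝ => s ^ (β - 1)) t]
  rw [integral_rpow (Or.inl (by linarith))]
  simp [sub_self, Real.zero_rpow hβ0.ne', sub_add_cancel]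

lemma integral_lt {β tn t : ℝ} (hβ0 : 0 < β) (hα : β - 1 < 0) (htn : 0 < tn) (ht : 0 < t)
    (hle : t ≤ tn) :
    ∫ s in (0:ℝ)..t, (t - s) ^ (β - 1) *
        deriv (fun s : ℝ => if s ≤ tn then s * tn ^ (-β - 1) else s ^ (-β)) s
      = tn ^ (-β - 1) * (t ^ β / β) := by
  have h : EqOn (fun s => (t - s) ^ (β - 1) *
        deriv (fun s : ℝ => if s ≤ tn then s * tn ^ (-β - 1) else s ^ (-β)) s)
      (fun s => (t - s) ^ (β - 1) * tn ^ (-β - 1)) (Set.uIcc 0 t) := by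
    intro s hs
    rw [Set.uIcc_of_le ht.le] at hs
    rcases eq_or_lt_of_le hs.2 with h' | h'
    · simp only [h', sub_self, Real.zero_rpow (by linarith : β - 1 ≠ 0), zero_mul]
    · simp only [bar_deriv_lt s (lt_of_lt_of_le h' hle)]
  rw [intervalIntegral.integral_congr h, intervalIntegral.integral_mul_const,
    integral_tminus β t hβ0 0, sub_zero]
  ring



lemma integral_tminus' (β t a b : ℝ) (hβ0 : 0 < β) :
    ∫ s in a..b, (t - s) ^ (β - 1) = ((t - a) ^ β - (t - b) ^ β) / β := by
  rw [intervalIntegral.integral_comp_sub_left (fun s : ℝ => s ^ (β - 1)) t]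
  rw [integral_rpow (Or.inl (by linarith))]
  rw [sub_add_cancel]

lemma ae_ne_real (c : ℝ) : ∀ᵐ x : ℝ ∂(volume : Measure ℝ), x ≠ c := by
  refine MeasureTheory.ae_iff.mpr ?_
  have : {a : ℝ | ¬a ≠ c} = {c} := by ext x; simp
  rw [this]
  exact Real.volume_singleton

lemma integral_gt {β tn t : ℝ} (hβ0 : 0 < β) (hβ1 : β < 1) (htn : 0 < tn) (ht : tn < t) :
    ∫ s in (0:ℝ)..t, (t - s) ^ (β - 1) *
        deriv (fun s : ℝ => if s ≤ tn then s * tn ^ (-β - 1) else s ^ (-β)) s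
      = tn ^ (-β - 1) * ((t ^ β - (t - tn) ^ β) / β) - (t - tn) ^ β * tn ^ (-β) * t⁻¹ := by
  have ht0 : (0:ℝ) < t := htn.trans ht
  set D : ℝ → ℝ := deriv (fun s : ℝ => if s ≤ tn then s * tn ^ (-β - 1) else s ^ (-β)) with hD
  set f : ℝ → ℝ := fun s => (t - s) ^ (β - 1) * D s with hf
  set g1 : ℝ → ℝ := fun s => (t - s) ^ (β - 1) * tn ^ (-β - 1) with hg1
  set g2 : ℝ → ℝ := fun s => (t - s) ^ (β - 1) * (-β * s ^ (-β - 1)) with hg2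
  -- integrability of g1 on [0, tn]
  have hg1int : IntervalIntegrable g1 volume 0 tn := by
    apply ContinuousOn.intervalIntegrable
    apply ContinuousOn.mul _ continuousOn_const
    intro x hx
    rw [Set.uIcc_of_le htn.le] at hx
    have : t - x ≠ 0 := by
      have := hx.2; intro h; nlinarith [hx.1]
    exact ((Real.continuousAt_rpow_const _ _ (Or.inl this)).comp
      (by fun_prop : ContinuousAt (fun s : ℝ => t - s) x)).continuousWithinAt
  -- integrable majorant on [tn, t]
  have hmaj : IntervalIntegrable (fun s : ℝ => (t - s) ^ (β - 1)) volume tn t := by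
    have h0 := (intervalIntegrable_rpow' (a := 0) (b := t - tn)
      (show (-1:ℝ) < β - 1 by linarith)).comp_sub_left t
    simp only [sub_zero, sub_sub_cancel] at h0
    exact h0.symm
  -- integrability of g2 on [tn, t]
  have hg2int : IntervalIntegrable g2 volume tn t := by
    apply IntervalIntegrable.mono_fun' ((hmaj.mul_const (β * tn ^ (-β - 1))))
    · exact (by fun_prop : Measurable g2).aestronglyMeasurable
    · rw [Set.uIoc_of_le ht.le]
      filter_upwards [ae_restrict_mem measurableSet_Ioc] with x hx
      have hx0 : (0:ℝ) < x := htn.trans hx.1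
      have htx : (0:ℝ) ≤ t - x := by linarith [hx.2]
      rw [Real.norm_eq_abs, abs_mul, abs_of_nonneg (Real.rpow_nonneg htx _), abs_mul,
        abs_neg, abs_of_nonneg hβ0.le, abs_of_nonneg (Real.rpow_nonneg hx0.le _)]
      have hle : x ^ (-β - 1) ≤ tn ^ (-β - 1) :=
        Real.rpow_le_rpow_of_nonpos htn hx.1.le (by linarith)
      have h1 : (0:ℝ) ≤ (t - x) ^ (β - 1) := Real.rpow_nonneg htx _
      nlinarith [mul_le_mul_of_nonneg_left hle (mul_nonneg hβ0.le h1)]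
  -- f agrees a.e. with g1 on (0, tn] and with g2 on (tn, t]
  have hmem1 : ∀ᵐ x ∂(volume : MeasureTheory.Measure ℝ), x ∈ Set.uIoc (0:ℝ) tn → f x = g1 x := by
    filter_upwards [ae_ne_real tn] with x hne hx
    rw [Set.uIoc_of_le htn.le] at hx
    have : x < tn := lt_of_le_of_ne hx.2 hne
    simp only [hf, hg1, hD, bar_deriv_lt x this]
  have hmem2 : ∀ᵐ x ∂(volume : MeasureTheory.Measure ℝ), x ∈ Set.uIoc tn t → f x = g2 x := by
    filter_upwards with x hx
    rw [Set.uIoc_of_le ht.le] at hx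
    simp only [hf, hg2, hD, bar_deriv_gt htn x hx.1]
  have hfg1 : f =ᵐ[volume.restrict (Set.uIoc (0:ℝ) tn)] g1 :=
    (ae_restrict_iff' measurableSet_uIoc).mpr hmem1
  have hfg2 : f =ᵐ[volume.restrict (Set.uIoc tn t)] g2 :=
    (ae_restrict_iff' measurableSet_uIoc).mpr hmem2
  have hfint1 : IntervalIntegrable f volume 0 tn := by
    rw [intervalIntegrable_iff] at hg1int ⊢
    exact hg1int.congr hfg1.symm
  have hfint2 : IntervalIntegrable f volume tn t := by
    rw [intervalIntegrable_iff] at hg2int ⊢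
    exact hg2int.congr hfg2.symm
  have hsplit : ∫ s in (0:ℝ)..t, f s = (∫ s in (0:ℝ)..tn, f s) + ∫ s in tn..t, f s :=
    (integral_add_adjacent_intervals hfint1 hfint2).symm
  have hI1 : ∫ s in (0:ℝ)..tn, f s = tn ^ (-β - 1) * ((t ^ β - (t - tn) ^ β) / β) := by
    rw [intervalIntegral.integral_congr_ae hmem1]
    rw [hg1, intervalIntegral.integral_mul_const, integral_tminus' β t 0 tn hβ0, sub_zero]
    ring
  have hI2 : ∫ s in tn..t, f s = -((t - tn) ^ β * tn ^ (-β) * t⁻¹) := by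
    rw [intervalIntegral.integral_congr_ae hmem2]
    have hFTC : ∫ s in tn..t, g2 s
        = ((t - t) ^ β * t ^ (-β) / t) - ((t - tn) ^ β * tn ^ (-β) / t) := by
      apply intervalIntegral.integral_eq_sub_of_hasDeriv_right_of_le
        (f := fun s : ℝ => (t - s) ^ β * s ^ (-β) / t) ht.le _ _ hg2int
      · -- continuity of H on Icc tn t
        intro x hx
        have hx0 : (0:ℝ) < x := lt_of_lt_of_le htn hx.1
        apply ContinuousWithinAt.div_const
        apply ContinuousAt.continuousWithinAt
        apply ContinuousAt.mul
        · exact (Real.continuousAt_rpow_const _ _ (Or.inr hβ0.le)).comp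
            (by fun_prop : ContinuousAt (fun s : ℝ => t - s) x)
        · exact Real.continuousAt_rpow_const _ _ (Or.inl hx0.ne')
      · -- derivative on Ioo tn t
        intro x hx
        have hx0 : (0:ℝ) < x := htn.trans hx.1
        have htx : (0:ℝ) < t - x := by linarith [hx.2]
        have d1 : HasDerivAt (fun s : ℝ => (t - s) ^ β) (β * (t - x) ^ (β - 1) * (0 - 1)) x :=
          (Real.hasDerivAt_rpow_const (Or.inl htx.ne')).comp x
            ((hasDerivAt_const x t).sub (hasDerivAt_id x))
        have d2 : HasDerivAt (fun s : ℝ => s ^ (-β)) (-β * x ^ (-β - 1)) x :=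
          Real.hasDerivAt_rpow_const (Or.inl hx0.ne')
        have d3 := (d1.mul d2).div_const t
        have hval : (β * (t - x) ^ (β - 1) * (0 - 1) * x ^ (-β)
            + (t - x) ^ β * (-β * x ^ (-β - 1))) / t = g2 x := by
          have e1 : x ^ (-β) = x ^ (-β - 1) * x := by
            rw [show (-β : ℝ) = -β - 1 + 1 by ring, Real.rpow_add_one hx0.ne']
            ring_nf
          have e2 : (t - x) ^ β = (t - x) ^ (β - 1) * (t - x) := by
            rw [show (β : ℝ) = β - 1 + 1 by ring, Real.rpow_add_one htx.ne']
            ring_nf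
          rw [e1, e2, hg2]
          field_simp
          ring
        rw [← hval]
        exact d3.hasDerivWithinAt
    rw [hFTC]
    rw [sub_self, Real.zero_rpow hβ0.ne']
    ring
  rw [show (∫ s in (0:ℝ)..t, (t - s) ^ (β - 1) * D s) = ∫ s in (0:ℝ)..t, f s from rfl,
    hsplit, hI1, hI2]
  ring

/-- The Caputo fractional derivative of order `α`. -/
noncomputable def caputo (α : ℝ) (v : ℝ → ℝ) (t : ℝ) : ℝ :=
  (1 / Real.Gamma (1 - α)) * ∫ s in (0:ℝ)..t, (t - s) ^ (-α) * deriv v s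

/-- lower bounds for the Caputo derivative of the barrier function
`B(s) = s t_n^{−β−1}` for `s ≤ t_n`, `B(s) = s^{−β}` for `s ≥ t_n`, `β = 1 − α`. -/
theorem stmt6 (α : ℝ) (hα : α ∈ Set.Ioo (0:ℝ) 1) (tn : ℝ) (htn : 0 < tn) :
    (∀ t, tn < t →
      Real.Gamma (1 - α) *
          caputo α (fun s => if s ≤ tn then s * tn ^ (-(1 - α) - 1) else s ^ (-(1 - α))) t
        ≥ (1 - α) * (tn / t) ^ α * t⁻¹) ∧
    (∀ t, 0 < t → t ≤ tn →
      Real.Gamma (1 - α) *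
          caputo α (fun s => if s ≤ tn then s * tn ^ (-(1 - α) - 1) else s ^ (-(1 - α))) t
        ≥ (1 - α)⁻¹ * (t / tn) ^ (1 - α) * tn⁻¹ ∧
      (0:ℝ) ≤ (1 - α)⁻¹ * (t / tn) ^ (1 - α) * tn⁻¹) := by
  obtain ⟨hα0, hα1⟩ := hα
  have hβ0 : (0:ℝ) < 1 - α := by linarith
  have hβ1 : (1:ℝ) - α < 1 := by linarith
  have hΓ : Real.Gamma (1 - α) ≠ 0 := (Real.Gamma_pos_of_pos hβ0).ne'
  constructor
  · intro t ht
    have ht0 : (0:ℝ) < t := htn.trans ht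
    simp only [caputo, one_div, mul_inv_cancel_left₀ hΓ]
    rw [show -α = (1 - α) - 1 by ring]
    rw [integral_gt hβ0 hβ1 htn ht]
    set β := 1 - α with hb
    have httn : (0:ℝ) < t - tn := by linarith
    set P : ℝ := tn ^ β with hPd
    set Q : ℝ := t ^ β with hQd
    set R : ℝ := (t - tn) ^ β with hRd
    have hP : 0 < P := Real.rpow_pos_of_pos htn β
    have hQ : 0 < Q := Real.rpow_pos_of_pos ht0 β
    have hR : 0 < R := Real.rpow_pos_of_pos httn β
    have c1 : tn ^ (-β - 1) = (P * tn)⁻¹ := by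
      rw [show -β - 1 = -(β + 1) by ring, Real.rpow_neg htn.le, Real.rpow_add htn,
        Real.rpow_one, hPd]
    have c2 : tn ^ (-β) = P⁻¹ := by
      rw [Real.rpow_neg htn.le, hPd]
    have hx0 : (0:ℝ) < tn / t := by positivity
    have c3 : (tn / t) ^ α = (tn / t) * (Q / P) := by
      rw [show α = 1 + (-β) by rw [hb]; ring, Real.rpow_add hx0, Real.rpow_one,
        Real.rpow_neg hx0.le, Real.div_rpow htn.le ht0.le, inv_div, hPd, hQd]
    have hkey : β * (tn / t) ^ 2 ≤ (1 - R / Q) / β - (tn / t) * (R / Q) := by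
      have h := key_ineq hβ0 hβ1 (x := tn / t) hx0.le
        (le_of_lt ((div_lt_one ht0).mpr ht))
      rw [show (1:ℝ) - tn / t = (t - tn) / t by field_simp,
        Real.div_rpow httn.le ht0.le, ← hQd, ← hRd] at h
      exact h
    have hm := mul_le_mul_of_nonneg_right hkey (show (0:ℝ) ≤ Q / (P * tn) by positivity)
    rw [ge_iff_le, c1, c2, c3]
    have eqB : β * ((tn / t) * (Q / P)) * t⁻¹ = β * (tn / t) ^ 2 * (Q / (P * tn)) := by
      field_simp
    have eqA : (P * tn)⁻¹ * ((Q - R) / β) - R * P⁻¹ * t⁻¹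
        = ((1 - R / Q) / β - (tn / t) * (R / Q)) * (Q / (P * tn)) := by
      field_simp
    rw [eqB, eqA]
    exact hm
  · intro t ht0 htle
    refine ⟨?_, by positivity⟩
    simp only [caputo, one_div, mul_inv_cancel_left₀ hΓ]
    rw [show -α = (1 - α) - 1 by ring]
    rw [integral_lt hβ0 (by linarith) htn ht0 htle]
    apply le_of_eq
    set β := 1 - α with hb
    rw [Real.div_rpow ht0.le htn.le,
      show tn ^ (-β - 1) = (tn ^ β * tn)⁻¹ by
        rw [show -β - 1 = -(β + 1) by ring, Real.rpow_neg htn.le, Real.rpow_add htn,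
          Real.rpow_one]]
    have h1 : tn ^ β ≠ 0 := (Real.rpow_pos_of_pos htn β).ne'
    have h2 : t ≠ 0 := ht0.ne'
    have h3 : tn ≠ 0 := htn.ne'
    have h4 : β ≠ 0 := hβ0.ne'
    field_simp
end

section
/- (Interpolation error on the first mesh interval.) Let σ ∈ (0,1) ∪ (1,2), t₁ > 0, and C > 0. Let u : [0,t₁] → ℝ be continuous, twice continuously differentiable on (0,t₁], with |u′(t)| ≤ C(1 + t^{σ−1}) and |u″(t)| ≤ C·t^{σ−2} for all t ∈ (0,t₁]. Let u^I be the affine function with u^I(0) = u(0) and u^I(t₁) = u(t₁). Then there is a constant C′ > 0, depending only on C and σ, such that |u(s) − u^I(s)| ≤ C′·(t₁ − s)·(s^{σ−1} + t₁^{σ−1}) for all s ∈ (0, t₁). -/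
open MeasureTheory intervalIntegral Set

/-- interpolation error on the first mesh interval:
`|u(s) − u^I(s)| ≤ C′ (t₁ − s)(s^{σ−1} + t₁^{σ−1})` for `s ∈ (0, t₁)`, where
`u^I` is the affine interpolant of `u` at `0` and `t₁`. -/
theorem stmt9 (σ C : ℝ) (hσ : σ ∈ Set.Ioo (0:ℝ) 1 ∪ Set.Ioo (1:ℝ) 2) (hC : 0 < C) :
    ∃ C' : ℝ, 0 < C' ∧
      ∀ t₁ : ℝ, 0 < t₁ → ∀ u : ℝ → ℝ,
        ContinuousOn u (Set.Icc 0 t₁) →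
        (∀ s ∈ Set.Ioc (0:ℝ) t₁, DifferentiableAt ℝ u s) →
        (∀ s ∈ Set.Ioc (0:ℝ) t₁, DifferentiableAt ℝ (deriv u) s) →
        ContinuousOn (deriv (deriv u)) (Set.Ioc 0 t₁) →
        (∀ s ∈ Set.Ioc (0:ℝ) t₁, |deriv u s| ≤ C * (1 + s ^ (σ - 1))) →
        (∀ s ∈ Set.Ioc (0:ℝ) t₁, |deriv (deriv u) s| ≤ C * s ^ (σ - 2)) →
        ∀ s ∈ Set.Ioo (0:ℝ) t₁,
          |u s - (u 0 + (s / t₁) * (u t₁ - u 0))| ≤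
            C' * (t₁ - s) * (s ^ (σ - 1) + t₁ ^ (σ - 1)) := by
  have hσ0 : 0 < σ := by rcases hσ with h | h <;> [exact h.1; linarith [h.1]]
  have hσ2 : σ < 2 := by rcases hσ with h | h <;> [linarith [h.2]; exact h.2]
  have hσne : σ ≠ 1 := by rcases hσ with h | h <;> [exact ne_of_lt h.2; exact ne_of_gt h.1]
  have habs : 0 < |σ - 1| := abs_pos.mpr (sub_ne_zero.mpr hσne)
  set c : ℝ := C / |σ - 1| with hc_def
  have hc : 0 < c := div_pos hC habs
  have hσinv : 0 < 1 / σ := by positivity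
  refine ⟨c * (3 + 1 / σ), by positivity, ?_⟩
  intro t₁ ht₁ u hu hd1 hd2 hcont2 hb1 hb2 s hs
  obtain ⟨hs0, hst⟩ := hs
  have hst' : s ≤ t₁ := le_of_lt hst
  have hsmem : s ∈ Set.Ioc (0:ℝ) t₁ := ⟨hs0, hst'⟩
  have hcont1 : ContinuousOn (deriv u) (Set.Ioc 0 t₁) := fun x hx =>
    ((hd2 x hx).continuousAt).continuousWithinAt
  set m : ℝ := deriv u s with hm_def
  -- pointwise derivative difference bound
  have hkey : ∀ x ∈ Set.Ioc (0:ℝ) t₁, ∀ y ∈ Set.Ioc (0:ℝ) t₁, x ≤ y →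
      |deriv u y - deriv u x| ≤ c * (x ^ (σ - 1) + y ^ (σ - 1)) := by
    intro x hx y hy hxy
    have hx0 : 0 < x := hx.1
    have hsub : Set.uIcc x y ⊆ Set.Ioc 0 t₁ := by
      rw [Set.uIcc_of_le hxy]
      exact fun z hz => ⟨lt_of_lt_of_le hx0 hz.1, le_trans hz.2 hy.2⟩
    have hftc : ∫ τ in x..y, deriv (deriv u) τ = deriv u y - deriv u x :=
      intervalIntegral.integral_eq_sub_of_hasDerivAt
        (fun τ hτ => (hd2 τ (hsub hτ)).hasDerivAt)
        ((hcont2.mono hsub).intervalIntegrable)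
    have hgcont : ContinuousOn (fun τ : ℝ => C * τ ^ (σ - 2)) (Set.uIcc x y) := by
      refine ContinuousOn.mul continuousOn_const ?_
      refine ContinuousOn.rpow_const continuousOn_id (fun z hz => Or.inl ?_)
      rw [Set.uIcc_of_le hxy] at hz
      exact ne_of_gt (lt_of_lt_of_le hx0 hz.1)
    have hgint : IntervalIntegrable (fun τ : ℝ => C * τ ^ (σ - 2)) volume x y :=
      hgcont.intervalIntegrable
    have hbd : ‖∫ τ in x..y, deriv (deriv u) τ‖ ≤ |∫ τ in x..y, C * τ ^ (σ - 2)| := by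
      refine intervalIntegral.norm_integral_le_abs_of_norm_le ?_ hgint
      refine ae_restrict_of_forall_mem measurableSet_uIoc ?_
      intro t ht
      rw [Set.uIoc_of_le hxy] at ht
      exact hb2 t ⟨lt_trans hx0 ht.1, le_trans ht.2 hy.2⟩
    have hval : ∫ τ in x..y, C * τ ^ (σ - 2) =
        C * ((y ^ (σ - 1) - x ^ (σ - 1)) / (σ - 1)) := by
      rw [intervalIntegral.integral_const_mul, integral_rpow (Or.inr ⟨by
        intro h
        apply hσne
        linarith [sub_eq_iff_eq_add.mp h], by
        rw [Set.uIcc_of_le hxy]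
        intro h
        exact absurd h.1 (not_le.mpr hx0)⟩)]
      rw [show σ - 2 + 1 = σ - 1 by ring]
    have hxnn : (0:ℝ) ≤ x ^ (σ - 1) := Real.rpow_nonneg hx0.le _
    have hynn : (0:ℝ) ≤ y ^ (σ - 1) := Real.rpow_nonneg (lt_of_lt_of_le hx0 hxy).le _
    have habs2 : |y ^ (σ - 1) - x ^ (σ - 1)| ≤ x ^ (σ - 1) + y ^ (σ - 1) := by
      rw [abs_sub_le_iff]; constructor <;> linarith
    rw [← hftc]
    refine hbd.trans ?_
    rw [hval, abs_mul, abs_of_pos hC, abs_div]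
    calc C * (|y ^ (σ - 1) - x ^ (σ - 1)| / |σ - 1|)
        ≤ C * ((x ^ (σ - 1) + y ^ (σ - 1)) / |σ - 1|) := by gcongr
      _ = c * (x ^ (σ - 1) + y ^ (σ - 1)) := by rw [hc_def]; ring
  -- integrability of deriv u on (0, t₁)
  have hg_int : IntervalIntegrable (fun τ : ℝ => C * (1 + τ ^ (σ - 1))) volume 0 t₁ := by
    refine IntervalIntegrable.const_mul ?_ C
    exact intervalIntegrable_const.add (intervalIntegrable_rpow' (by linarith))
  have hint : IntervalIntegrable (deriv u) volume 0 t₁ := by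
    refine hg_int.mono_fun' ?_ ?_
    · rw [Set.uIoc_of_le ht₁.le]
      exact hcont1.aestronglyMeasurable measurableSet_Ioc
    · refine ae_restrict_of_forall_mem measurableSet_uIoc ?_
      intro t ht
      rw [Set.uIoc_of_le ht₁.le] at ht
      exact hb1 t ht
  have hint_s : IntervalIntegrable (deriv u) volume 0 s := by
    refine hint.mono_set ?_
    rw [Set.uIcc_of_le hs0.le, Set.uIcc_of_le ht₁.le]
    exact Set.Icc_subset_Icc le_rfl hst'
  -- FTC on [0, s]
  have eqA : ∫ τ in (0:ℝ)..s, (deriv u τ - m) = (u s - m * s) - (u 0 - m * 0) := by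
    refine intervalIntegral.integral_eq_sub_of_hasDeriv_right_of_le (f := fun τ => u τ - m * τ)
      (f' := fun τ => deriv u τ - m) hs0.le ?_ ?_ ?_
    · exact (hu.mono (Set.Icc_subset_Icc le_rfl hst')).sub
        ((continuous_const.mul continuous_id).continuousOn)
    · intro x hx
      have hx' : x ∈ Set.Ioc (0:ℝ) t₁ := ⟨hx.1, le_trans hx.2.le hst'⟩
      have h1 : HasDerivAt (fun τ => u τ - m * τ) (deriv u x - m) x := by
        have := ((hd1 x hx').hasDerivAt).sub ((hasDerivAt_id x).const_mul m)
        rw [mul_one] at this; exact this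
      exact h1.hasDerivWithinAt
    · exact hint_s.sub intervalIntegrable_const
  -- FTC on [s, t₁]
  have eqB : ∫ τ in s..t₁, (deriv u τ - m) = (u t₁ - m * t₁) - (u s - m * s) := by
    have hsub : Set.uIcc s t₁ ⊆ Set.Ioc 0 t₁ := by
      rw [Set.uIcc_of_le hst']
      exact fun z hz => ⟨lt_of_lt_of_le hs0 hz.1, hz.2⟩
    refine intervalIntegral.integral_eq_sub_of_hasDerivAt (f := fun τ => u τ - m * τ)
      (f' := fun τ => deriv u τ - m) ?_ ?_
    · intro x hx
      have := ((hd1 x (hsub hx)).hasDerivAt).sub ((hasDerivAt_id x).const_mul m)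
      rw [mul_one] at this; exact this
    · exact ((hcont1.mono hsub).sub continuousOn_const).intervalIntegrable
  -- bound on A
  have hA : |∫ τ in (0:ℝ)..s, (deriv u τ - m)| ≤
      c * (s ^ σ / σ + s ^ (σ - 1) * s) := by
    have hgint : IntervalIntegrable (fun τ : ℝ => c * (τ ^ (σ - 1) + s ^ (σ - 1)))
        volume 0 s := by
      refine IntervalIntegrable.const_mul ?_ c
      exact (intervalIntegrable_rpow' (by linarith)).add intervalIntegrable_const
    have hbd := intervalIntegral.norm_integral_le_abs_of_norm_le
      (f := fun τ => deriv u τ - m) (g := fun τ : ℝ => c * (τ ^ (σ - 1) + s ^ (σ - 1)))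
      (a := 0) (b := s) (μ := volume) ?_ hgint
    · have hval : ∫ τ in (0:ℝ)..s, c * (τ ^ (σ - 1) + s ^ (σ - 1)) =
          c * (s ^ σ / σ + s ^ (σ - 1) * s) := by
        rw [intervalIntegral.integral_const_mul,
          intervalIntegral.integral_add (intervalIntegrable_rpow' (by linarith))
            intervalIntegrable_const,
          integral_rpow (Or.inl (by linarith)), intervalIntegral.integral_const]
        rw [sub_add_cancel, Real.zero_rpow (ne_of_gt hσ0)]
        simp only [smul_eq_mul, sub_zero]
        ring
      rw [hval] at hbd
      have hX : 0 ≤ c * (s ^ σ / σ + s ^ (σ - 1) * s) :=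
        mul_nonneg hc.le (add_nonneg (div_nonneg (Real.rpow_nonneg hs0.le σ) hσ0.le)
          (mul_nonneg (Real.rpow_nonneg hs0.le _) hs0.le))
      rw [Real.norm_eq_abs] at hbd
      rwa [abs_of_nonneg hX] at hbd
    · refine ae_restrict_of_forall_mem measurableSet_uIoc ?_
      intro t ht
      rw [Set.uIoc_of_le hs0.le] at ht
      have := hkey t ⟨ht.1, le_trans ht.2 hst'⟩ s hsmem ht.2
      rw [Real.norm_eq_abs, abs_sub_comm]
      exact this
  -- bound on B
  have hmono : ∀ τ ∈ Set.Ioc s t₁, τ ^ (σ - 1) ≤ s ^ (σ - 1) + t₁ ^ (σ - 1) := by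
    intro τ hτ
    rcases hσ with h | h
    · have h1 : τ ^ (σ - 1) ≤ s ^ (σ - 1) :=
        Real.rpow_le_rpow_of_nonpos hs0 hτ.1.le (by linarith [h.2])
      have h2 : (0:ℝ) ≤ t₁ ^ (σ - 1) := Real.rpow_nonneg ht₁.le _
      linarith
    · have h1 : τ ^ (σ - 1) ≤ t₁ ^ (σ - 1) :=
        Real.rpow_le_rpow (le_trans hs0.le hτ.1.le) hτ.2 (by linarith [h.1])
      have h2 : (0:ℝ) ≤ s ^ (σ - 1) := Real.rpow_nonneg hs0.le _
      linarith
  have hB : |∫ τ in s..t₁, (deriv u τ - m)| ≤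
      2 * c * (s ^ (σ - 1) + t₁ ^ (σ - 1)) * (t₁ - s) := by
    have hbd := intervalIntegral.norm_integral_le_of_norm_le_const
      (f := fun τ => deriv u τ - m) (a := s) (b := t₁)
      (C := 2 * c * (s ^ (σ - 1) + t₁ ^ (σ - 1))) ?_
    · rw [abs_of_nonneg (by linarith)] at hbd
      exact le_trans (le_of_eq (Real.norm_eq_abs _).symm) hbd
    · intro τ hτ
      rw [Set.uIoc_of_le hst'] at hτ
      have hτmem : τ ∈ Set.Ioc (0:ℝ) t₁ := ⟨lt_trans hs0 hτ.1, hτ.2⟩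
      have h1 := hkey s hsmem τ hτmem hτ.1.le
      have h2 := hmono τ hτ
      have h3 : (0:ℝ) ≤ s ^ (σ - 1) := Real.rpow_nonneg hs0.le _
      have h4 : (0:ℝ) ≤ t₁ ^ (σ - 1) := Real.rpow_nonneg ht₁.le _
      rw [Real.norm_eq_abs]
      calc |deriv u τ - m| ≤ c * (s ^ (σ - 1) + τ ^ (σ - 1)) := h1
        _ ≤ 2 * c * (s ^ (σ - 1) + t₁ ^ (σ - 1)) := by nlinarith
  -- combine
  set A := ∫ τ in (0:ℝ)..s, (deriv u τ - m) with hA_def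
  set B := ∫ τ in s..t₁, (deriv u τ - m) with hB_def
  have hE : u s - (u 0 + (s / t₁) * (u t₁ - u 0)) = (1 - s / t₁) * A - (s / t₁) * B := by
    rw [eqA, eqB]
    field_simp
    ring
  have hlam0 : 0 ≤ s / t₁ := by positivity
  have hlam1 : s / t₁ ≤ 1 := (div_le_one ht₁).mpr hst'
  have htri : |u s - (u 0 + (s / t₁) * (u t₁ - u 0))| ≤
      (1 - s / t₁) * |A| + (s / t₁) * |B| := by
    rw [hE]
    refine le_trans (abs_sub _ _) ?_
    rw [abs_mul, abs_mul, abs_of_nonneg (by linarith), abs_of_nonneg hlam0]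
  refine htri.trans ?_
  have hsσ : s ^ (σ - 1) * s = s ^ σ := by
    rw [← Real.rpow_add_one (ne_of_gt hs0)]
    norm_num
  have h3 : (0:ℝ) ≤ s ^ (σ - 1) := Real.rpow_nonneg hs0.le _
  have h4 : (0:ℝ) ≤ t₁ ^ (σ - 1) := Real.rpow_nonneg ht₁.le _
  have hAnn : (0:ℝ) ≤ |A| := abs_nonneg _
  have hBnn : (0:ℝ) ≤ |B| := abs_nonneg _
  -- final arithmetic
  have step1 : (1 - s / t₁) * |A| ≤ (t₁ - s) / t₁ * (c * (s ^ σ / σ + s ^ (σ - 1) * s)) := by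
    have : (1 - s / t₁) = (t₁ - s) / t₁ := by field_simp
    rw [this]
    exact mul_le_mul_of_nonneg_left hA (div_nonneg (by linarith) ht₁.le)
  have step2 : (s / t₁) * |B| ≤ 2 * c * (s ^ (σ - 1) + t₁ ^ (σ - 1)) * (t₁ - s) := by
    calc (s / t₁) * |B| ≤ 1 * |B| := mul_le_mul_of_nonneg_right hlam1 hBnn
      _ = |B| := one_mul _
      _ ≤ _ := hB
  have step1' : (t₁ - s) / t₁ * (c * (s ^ σ / σ + s ^ (σ - 1) * s)) ≤
      c * (1 + 1 / σ) * (t₁ - s) * (s ^ (σ - 1) + t₁ ^ (σ - 1)) := by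
    rw [div_mul_eq_mul_div, div_le_iff₀ ht₁]
    have hσs : s ^ σ = s ^ (σ - 1) * s := hsσ.symm
    rw [hσs]
    have key : s ^ (σ - 1) * s ≤ (s ^ (σ - 1) + t₁ ^ (σ - 1)) * t₁ := by nlinarith
    have hfac : 0 ≤ (t₁ - s) * c * (1 + 1/σ) := mul_nonneg (mul_nonneg (by linarith) hc.le) (by positivity)
    have e1 : (t₁ - s) * (c * (s ^ (σ - 1) * s / σ + s ^ (σ - 1) * s)) =
        (t₁ - s) * c * (1 + 1/σ) * (s ^ (σ - 1) * s) := by field_simp; ring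
    have e2 : c * (1 + 1 / σ) * (t₁ - s) * (s ^ (σ - 1) + t₁ ^ (σ - 1)) * t₁ =
        (t₁ - s) * c * (1 + 1/σ) * ((s ^ (σ - 1) + t₁ ^ (σ - 1)) * t₁) := by ring
    rw [e1, e2]
    exact mul_le_mul_of_nonneg_left key hfac
  have final : c * (1 + 1 / σ) * (t₁ - s) * (s ^ (σ - 1) + t₁ ^ (σ - 1)) +
      2 * c * (s ^ (σ - 1) + t₁ ^ (σ - 1)) * (t₁ - s) =
      c * (3 + 1 / σ) * (t₁ - s) * (s ^ (σ - 1) + t₁ ^ (σ - 1)) := by ring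
  linarith [step1.trans step1', step2]
end

section
/- (Interpolation error away from the initial time on a quasi-graded mesh.) Let σ ∈ (0,1) ∪ (1,2) and let the mesh 0 = t_0 < t_1 < ⋯ < t_M = T be quasi-graded with parameter r ≥ 1 and constants c₁, c₂. Let u be twice continuously differentiable on (0,T] with |u″(t)| ≤ C·t^{σ−2} for t ∈ (0,T], and let u^I be its piecewise-linear interpolant on the mesh. Then there exists C′ > 0, depending only on C, σ, r, c₁, c₂, such that for all 2 ≤ j ≤ m ≤ M and all s ∈ (t_{j−1}, t_j): |u(s) − u^I(s)| ≤ C′ · min{ τ^{2/r} s^{σ−2/r}, (t_m − s) τ^{1/r} s^{σ−1−1/r} }. -/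
open Set

lemma interp_err (u : ℝ → ℝ) (a b s B : ℝ) (hs : s ∈ Set.Ioo a b)
    (hu : ∀ x ∈ Set.Icc a b, DifferentiableAt ℝ u x)
    (hu' : ∀ x ∈ Set.Icc a b, DifferentiableAt ℝ (deriv u) x)
    (hB : ∀ x ∈ Set.Icc a b, |deriv (deriv u) x| ≤ B) :
    |u s - (u a + (s - a) * (u b - u a) / (b - a))| ≤ (s - a) * (b - s) * B := by
  obtain ⟨has, hsb⟩ := hs
  have hab : a < b := has.trans hsb
  have hba : (b - a) ≠ 0 := sub_ne_zero.2 hab.ne'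
  set mm : ℝ := (u b - u a) / (b - a) with hmm
  set L : ℝ → ℝ := fun x => u a + (x - a) * mm with hL
  have hprod : (0:ℝ) < (s - a) * (b - s) := mul_pos (by linarith) (by linarith)
  set K : ℝ := (u s - L s) / ((s - a) * (b - s)) with hK
  set g : ℝ → ℝ := fun x => u x - L x - K * ((x - a) * (b - x)) with hg
  have hga : g a = 0 := by simp [hg, hL]
  have hgb : g b = 0 := by
    simp only [hg, hL, hmm]
    field_simp
    ring
  have hgs : g s = 0 := by
    have : K * ((s - a) * (b - s)) = u s - L s := div_mul_cancel₀ _ hprod.ne'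
    simp [hg]; linarith
  -- derivative of g
  have hgd : ∀ x ∈ Set.Icc a b,
      HasDerivAt g (deriv u x - mm - K * (a + b - 2 * x)) x := by
    intro x hx
    have h1 : HasDerivAt u (deriv u x) x := (hu x hx).hasDerivAt
    have h2 : HasDerivAt (fun x : ℝ => L x) mm x := by
      have : HasDerivAt (fun x : ℝ => u a + (x - a) * mm) (1 * mm) x :=
        (((hasDerivAt_id x).sub_const a).mul_const mm).const_add (u a)
      simpa [hL] using this
    have h3 : HasDerivAt (fun x : ℝ => K * ((x - a) * (b - x))) (K * (a + b - 2 * x)) x := by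
      have hbx : HasDerivAt (fun x : ℝ => b - x) (-1 : ℝ) x := by
        simpa using (hasDerivAt_id' x).const_sub b
      have : HasDerivAt (fun x : ℝ => (x - a) * (b - x)) ((1) * (b - x) + (x - a) * (-1)) x :=
        (((hasDerivAt_id x).sub_const a)).mul hbx
      have := this.const_mul K
      exact this.congr_deriv (by ring)
    exact (h1.sub h2).sub h3
  have hgc : ContinuousOn g (Set.Icc a b) := fun x hx => ((hgd x hx).continuousAt).continuousWithinAt
  -- Rolle on [a,s]
  set g' : ℝ → ℝ := fun x => deriv u x - mm - K * (a + b - 2 * x) with hg'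
  obtain ⟨c, hc, hc0⟩ := exists_hasDerivAt_eq_zero has
    (hgc.mono (Set.Icc_subset_Icc le_rfl hsb.le)) (hga.trans hgs.symm)
    (fun x hx => hgd x ⟨hx.1.le, hx.2.le.trans hsb.le⟩)
  obtain ⟨d, hd, hd0⟩ := exists_hasDerivAt_eq_zero hsb
    (hgc.mono (Set.Icc_subset_Icc has.le le_rfl)) (hgs.trans hgb.symm)
    (fun x hx => hgd x ⟨has.le.trans hx.1.le, hx.2.le⟩)
  have hcd : c < d := hc.2.trans hd.1
  have hsubcd : Set.Icc c d ⊆ Set.Icc a b :=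
    Set.Icc_subset_Icc hc.1.le (hd.2.le)
  -- Rolle on g' over [c,d]
  have hg'd : ∀ x ∈ Set.Ioo c d, HasDerivAt g' (deriv (deriv u) x + 2 * K) x := by
    intro x hx
    have hx' : x ∈ Set.Icc a b := hsubcd ⟨hx.1.le, hx.2.le⟩
    have h1 : HasDerivAt (deriv u) (deriv (deriv u) x) x := (hu' x hx').hasDerivAt
    have h3 : HasDerivAt (fun x : ℝ => K * (a + b - 2 * x)) (K * (-2)) x := by
      have : HasDerivAt (fun x : ℝ => a + b - 2 * x) (-2 : ℝ) x := by
        simpa using ((hasDerivAt_id x).const_mul (2:ℝ)).const_sub (a + b)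
      simpa using this.const_mul K
    have := (h1.sub_const mm).sub h3
    exact this.congr_deriv (by ring)
  have hg'c : ContinuousOn g' (Set.Icc c d) := by
    intro x hx
    have hx' : x ∈ Set.Icc a b := hsubcd hx
    exact (((hu' x hx').continuousAt.sub continuousAt_const).sub
      (continuousAt_const.mul (by fun_prop))).continuousWithinAt
  obtain ⟨ξ, hξ, hξ0⟩ := exists_hasDerivAt_eq_zero hcd hg'c (hc0.trans hd0.symm) hg'd
  have hξab : ξ ∈ Set.Icc a b := hsubcd ⟨hξ.1.le, hξ.2.le⟩
  have h2K : 2 * |K| ≤ B := by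
    have h1 := hB ξ hξab
    have h2 : deriv (deriv u) ξ = -(2 * K) := by linarith
    rw [h2, abs_neg, abs_mul, abs_two] at h1
    exact h1
  have hE : u s - (u a + (s - a) * (u b - u a) / (b - a)) = K * ((s - a) * (b - s)) := by
    have h := div_mul_cancel₀ (u s - L s) hprod.ne'
    simp only [hL, mul_div_assoc] at h ⊢
    linarith
  rw [hE, abs_mul, abs_of_pos hprod]
  nlinarith [abs_nonneg K, hprod]

lemma ratio_bound (r c₂ a b : ℝ) (hr0 : 0 < r) (hc₂ : 0 < c₂) (ha0 : 0 < a)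
    (hab : a < b) (h : b - a ≤ c₂ * a ^ (1/r) * b ^ (1 - 1/r)) :
    b ≤ (2 + (2 * c₂) ^ r) * a := by
  have hb0 : 0 < b := ha0.trans hab
  have h2c : (0:ℝ) < 2 * c₂ := by linarith
  rcases le_or_gt b (2 * a) with hb2 | hb2
  · have : (0:ℝ) ≤ (2 * c₂) ^ r * a := by positivity
    nlinarith
  · have hbig : b / 2 < c₂ * a ^ (1/r) * b ^ (1 - 1/r) := by linarith
    have hsplit : b = b ^ (1/r) * b ^ (1 - 1/r) := by
      rw [← Real.rpow_add hb0, show 1/r + (1 - 1/r) = 1 by ring, Real.rpow_one]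
    have hb1r : b ^ (1/r) < 2 * c₂ * a ^ (1/r) := by
      have hbp : (0:ℝ) < b ^ (1 - 1/r) := Real.rpow_pos_of_pos hb0 _
      have h2 : b ^ (1/r) * b ^ (1 - 1/r) < (2 * c₂ * a ^ (1/r)) * b ^ (1 - 1/r) := by
        rw [← hsplit]; nlinarith
      exact lt_of_mul_lt_mul_right h2 hbp.le
    have hraise : (b ^ (1/r)) ^ r < (2 * c₂ * a ^ (1/r)) ^ r :=
      Real.rpow_lt_rpow (Real.rpow_nonneg hb0.le _) hb1r hr0
    have hL : (b ^ (1/r)) ^ r = b := by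
      rw [← Real.rpow_mul hb0.le, one_div, inv_mul_cancel₀ hr0.ne', Real.rpow_one]
    have hR : (2 * c₂ * a ^ (1/r)) ^ r = (2 * c₂) ^ r * a := by
      rw [Real.mul_rpow h2c.le (Real.rpow_nonneg ha0.le _),
        ← Real.rpow_mul ha0.le, one_div, inv_mul_cancel₀ hr0.ne', Real.rpow_one]
    rw [hL, hR] at hraise
    nlinarith

lemma constA1 (C c₂ K : ℝ) (hC : 0 < C) (hc : 0 < c₂) (hK : 1 ≤ K) :
    C * c₂ ^ 2 * K ^ 4 ≤ C * (1 + c₂) ^ 2 * (1 + K) ^ 4 := by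
  have h1 : c₂ ^ 2 ≤ (1 + c₂) ^ 2 := pow_le_pow_left₀ hc.le (by linarith) 2
  have h2 : K ^ 4 ≤ (1 + K) ^ 4 := pow_le_pow_left₀ (by linarith) (by linarith) 4
  exact mul_le_mul (mul_le_mul_of_nonneg_left h1 hC.le) h2 (by positivity) (by positivity)

lemma constA2 (C c₂ K : ℝ) (hC : 0 < C) (hc : 0 < c₂) (hK : 1 ≤ K) :
    C * c₂ * K ^ 3 ≤ C * (1 + c₂) ^ 2 * (1 + K) ^ 4 := by
  have h1 : c₂ ≤ (1 + c₂) ^ 2 := by nlinarith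
  have h2 : K ^ 3 ≤ (1 + K) ^ 4 := by
    calc K ^ 3 ≤ (1 + K) ^ 3 := pow_le_pow_left₀ (by linarith) (by linarith) 3
    _ ≤ (1 + K) ^ 4 := pow_le_pow_right₀ (by linarith) (by norm_num)
  exact mul_le_mul (mul_le_mul_of_nonneg_left h1 hC.le) h2 (by positivity) (by positivity)

/-- interpolation error away from the initial time on a
quasi-graded mesh:
`|u(s) − u^I(s)| ≤ C′ min{ τ^{2/r} s^{σ−2/r}, (t_m − s) τ^{1/r} s^{σ−1−1/r} }`
for `s ∈ (t_{j−1}, t_j)`, `2 ≤ j ≤ m ≤ M`. -/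
theorem stmt10 (σ r c₁ c₂ C : ℝ) (hσ : σ ∈ Set.Ioo (0:ℝ) 1 ∪ Set.Ioo (1:ℝ) 2)
    (hr : 1 ≤ r) (hc₁ : 0 < c₁) (hc₂ : 0 < c₂) (hC : 0 < C) :
    ∃ C' : ℝ, 0 < C' ∧
      ∀ (T : ℝ), 0 < T → ∀ (M : ℕ) (t : ℕ → ℝ),
        t 0 = 0 → t M = T →
        (∀ j, 1 ≤ j → j ≤ M → t (j - 1) < t j) →
        c₁ * (M : ℝ) ^ (-r) ≤ t 1 → t 1 ≤ c₂ * (M : ℝ) ^ (-r) →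
        (∀ j, 1 ≤ j → j ≤ M →
          t j - t (j - 1) ≤ c₂ * (t 1) ^ (1 / r) * (t j) ^ (1 - 1 / r)) →
        ∀ u uI : ℝ → ℝ,
          (∀ s ∈ Set.Ioc (0:ℝ) T, DifferentiableAt ℝ u s) →
          (∀ s ∈ Set.Ioc (0:ℝ) T, DifferentiableAt ℝ (deriv u) s) →
          ContinuousOn (deriv (deriv u)) (Set.Ioc 0 T) →
          (∀ s ∈ Set.Ioc (0:ℝ) T, |deriv (deriv u) s| ≤ C * s ^ (σ - 2)) →
          (∀ j, 1 ≤ j → j ≤ M → ∀ s ∈ Set.Icc (t (j - 1)) (t j),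
            uI s = u (t (j - 1)) +
              (s - t (j - 1)) * (u (t j) - u (t (j - 1))) / (t j - t (j - 1))) →
          ∀ j m : ℕ, 2 ≤ j → j ≤ m → m ≤ M →
            ∀ s ∈ Set.Ioo (t (j - 1)) (t j),
              |u s - uI s| ≤ C' * min ((t 1) ^ (2 / r) * s ^ (σ - 2 / r))
                ((t m - s) * (t 1) ^ (1 / r) * s ^ (σ - 1 - 1 / r)) := by
  have hσ2 : 0 < σ ∧ σ < 2 := by
    rcases hσ with h | h
    · exact ⟨h.1, by linarith [h.2]⟩
    · exact ⟨by linarith [h.1], h.2⟩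
  have hr0 : 0 < r := lt_of_lt_of_le one_pos hr
  have h2c : (0:ℝ) < 2 * c₂ := by linarith
  have hK₀1 : (1:ℝ) ≤ 2 + (2 * c₂) ^ r := by
    have : (0:ℝ) ≤ (2 * c₂) ^ r := Real.rpow_nonneg h2c.le r
    linarith
  set K₀ : ℝ := 2 + (2 * c₂) ^ r with hK₀def
  clear_value K₀
  have hK₀0 : (0:ℝ) < K₀ := by linarith
  refine ⟨C * (1 + c₂) ^ 2 * (1 + K₀) ^ 4, by positivity, ?_⟩
  intro T hT M t ht0 htM hmono hτ₁ hτ₂ hqg u uI hud hud2 _hcont hbound hinterp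
    j m hj2 hjm hmM s hsIoo
  -- monotonicity of the mesh
  have key : ∀ k, k ≤ M → ∀ i, i ≤ k → t i ≤ t k := by
    intro k
    induction k with
    | zero => intro _ i hi; simp [Nat.le_zero.mp hi]
    | succ n ih =>
      intro hn i hi
      rcases Nat.lt_or_ge i (n + 1) with h | h
      · have h1 : t i ≤ t n := ih (by omega) i (by omega)
        have h2 : t (n + 1 - 1) < t (n + 1) := hmono (n + 1) (by omega) hn
        simp only [Nat.add_sub_cancel] at h2
        linarith
      · have : i = n + 1 := by omega
        simp [show i = n + 1 by omega]
  have hjM : j ≤ M := hjm.trans hmM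
  have hM2 : 2 ≤ M := hj2.trans hjM
  have ht1pos : 0 < t 1 := by
    have hMpos : (0:ℝ) < (M:ℝ) := by exact_mod_cast Nat.lt_of_lt_of_le (by norm_num) hM2
    have : (0:ℝ) < c₁ * (M:ℝ) ^ (-r) := by positivity
    linarith
  obtain ⟨has, hsb⟩ := hsIoo
  have hab : t (j - 1) < t j := hmono j (by omega) hjM
  have ht1a : t 1 ≤ t (j - 1) := key (j - 1) (by omega) 1 (by omega)
  have ha0 : 0 < t (j - 1) := lt_of_lt_of_le ht1pos ht1a
  have hb0 : 0 < t j := ha0.trans hab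
  have hbtm : t j ≤ t m := key m hmM j hjm
  have htmT : t m ≤ T := htM ▸ key M le_rfl m hmM
  have hbT : t j ≤ T := hbtm.trans htmT
  have hs0 : 0 < s := ha0.trans has
  -- ratio bound
  have hbK : t j ≤ K₀ * t (j - 1) := by
    rw [hK₀def]
    apply ratio_bound r c₂ _ _ hr0 hc₂ ha0 hab
    have hta : (t 1) ^ (1/r) ≤ (t (j - 1)) ^ (1/r) :=
      Real.rpow_le_rpow ht1pos.le ht1a (by positivity)
    have hbp : (0:ℝ) ≤ (t j) ^ (1 - 1/r) := Real.rpow_nonneg hb0.le _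
    calc t j - t (j - 1) ≤ c₂ * (t 1) ^ (1/r) * (t j) ^ (1 - 1/r) :=
        hqg j (by omega) hjM
    _ ≤ c₂ * (t (j - 1)) ^ (1/r) * (t j) ^ (1 - 1/r) := by
        apply mul_le_mul_of_nonneg_right _ hbp
        exact mul_le_mul_of_nonneg_left hta hc₂.le
  have hbKs : t j ≤ K₀ * s :=
    hbK.trans (mul_le_mul_of_nonneg_left has.le hK₀0.le)
  -- bound on a^{σ-2}
  have hapow : (t (j - 1)) ^ (σ - 2) ≤ K₀ ^ 2 * s ^ (σ - 2) := by
    have h1 : s / K₀ ≤ t (j - 1) := by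
      rw [div_le_iff₀ hK₀0]
      calc s ≤ t j := hsb.le
      _ ≤ K₀ * t (j - 1) := hbK
      _ = t (j - 1) * K₀ := by ring
    have h2 : (t (j - 1)) ^ (σ - 2) ≤ (s / K₀) ^ (σ - 2) :=
      Real.rpow_le_rpow_of_nonpos (by positivity) h1 (by linarith [hσ2.2])
    have h3 : (s / K₀) ^ (σ - 2) = s ^ (σ - 2) * K₀ ^ (2 - σ) := by
      rw [Real.div_rpow hs0.le hK₀0.le, div_eq_mul_inv,
        ← Real.rpow_neg hK₀0.le, show -(σ - 2) = 2 - σ by ring]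
    have h4 : K₀ ^ (2 - σ) ≤ K₀ ^ ((2:ℕ):ℝ) :=
      Real.rpow_le_rpow_of_exponent_le hK₀1 (by push_cast; linarith [hσ2.1])
    rw [Real.rpow_natCast] at h4
    have hsp : (0:ℝ) ≤ s ^ (σ - 2) := Real.rpow_nonneg hs0.le _
    calc (t (j - 1)) ^ (σ - 2) ≤ s ^ (σ - 2) * K₀ ^ (2 - σ) := h2.trans_eq h3
    _ ≤ s ^ (σ - 2) * K₀ ^ 2 := mul_le_mul_of_nonneg_left h4 hsp
    _ = K₀ ^ 2 * s ^ (σ - 2) := by ring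
  -- bound on b^{1-1/r}
  have hbpow : (t j) ^ (1 - 1/r) ≤ K₀ * s ^ (1 - 1/r) := by
    have h1 : (t j) ^ (1 - 1/r) ≤ (K₀ * s) ^ (1 - 1/r) := by
      apply Real.rpow_le_rpow hb0.le hbKs
      have : 1/r ≤ 1 := by rw [div_le_one hr0]; exact hr
      linarith
    have h2 : (K₀ * s) ^ (1 - 1/r) = K₀ ^ (1 - 1/r) * s ^ (1 - 1/r) :=
      Real.mul_rpow hK₀0.le hs0.le
    have h3 : K₀ ^ (1 - 1/r) ≤ K₀ := by
      nth_rewrite 2 [← Real.rpow_one K₀]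
      apply Real.rpow_le_rpow_of_exponent_le hK₀1
      have : 0 < 1/r := by positivity
      linarith
    have hsp : (0:ℝ) ≤ s ^ (1 - 1/r) := Real.rpow_nonneg hs0.le _
    calc (t j) ^ (1 - 1/r) ≤ K₀ ^ (1 - 1/r) * s ^ (1 - 1/r) := h1.trans_eq h2
    _ ≤ K₀ * s ^ (1 - 1/r) := mul_le_mul_of_nonneg_right h3 hsp
  -- step bound
  have hD : t j - t (j - 1) ≤ c₂ * K₀ * ((t 1) ^ (1/r) * s ^ (1 - 1/r)) := by
    have hP0 : (0:ℝ) ≤ (t 1) ^ (1/r) := Real.rpow_nonneg ht1pos.le _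
    calc t j - t (j - 1) ≤ c₂ * (t 1) ^ (1/r) * (t j) ^ (1 - 1/r) :=
        hqg j (by omega) hjM
    _ ≤ c₂ * (t 1) ^ (1/r) * (K₀ * s ^ (1 - 1/r)) := by
        exact mul_le_mul_of_nonneg_left hbpow (by positivity)
    _ = c₂ * K₀ * ((t 1) ^ (1/r) * s ^ (1 - 1/r)) := by ring
  -- the interpolation error bound
  have hsub : Set.Icc (t (j - 1)) (t j) ⊆ Set.Ioc 0 T := fun x hx =>
    ⟨lt_of_lt_of_le ha0 hx.1, hx.2.trans hbT⟩
  have hE : |u s - (u (t (j - 1)) +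
      (s - t (j - 1)) * (u (t j) - u (t (j - 1))) / (t j - t (j - 1)))| ≤
      (s - t (j - 1)) * (t j - s) * (C * (t (j - 1)) ^ (σ - 2)) := by
    apply interp_err u _ _ s _ ⟨has, hsb⟩
      (fun x hx => hud x (hsub hx)) (fun x hx => hud2 x (hsub hx))
    intro x hx
    have h1 := hbound x (hsub hx)
    have h2 : x ^ (σ - 2) ≤ (t (j - 1)) ^ (σ - 2) :=
      Real.rpow_le_rpow_of_nonpos ha0 hx.1 (by linarith [hσ2.2])
    exact h1.trans (mul_le_mul_of_nonneg_left h2 hC.le)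
  rw [hinterp j (by omega) hjM s ⟨has.le, hsb.le⟩]
  have hXid : (t 1) ^ (2/r) * s ^ (σ - 2/r) =
      ((t 1) ^ (1/r) * s ^ (1 - 1/r)) * ((t 1) ^ (1/r) * s ^ (1 - 1/r)) * s ^ (σ - 2) := by
    rw [show σ - 2/r = (1 - 1/r) + ((1 - 1/r) + (σ - 2)) by ring,
      show (2:ℝ)/r = 1/r + 1/r by ring,
      Real.rpow_add ht1pos, Real.rpow_add hs0, Real.rpow_add hs0]
    ring
  have hYid : s ^ (σ - 1 - 1/r) = s ^ (1 - 1/r) * s ^ (σ - 2) := by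
    rw [show σ - 1 - 1/r = (1 - 1/r) + (σ - 2) by ring, Real.rpow_add hs0]
  rw [hXid, hYid]
  have htms : 0 < t m - s := by linarith
  have hP0 : (0:ℝ) < (t 1) ^ (1/r) := Real.rpow_pos_of_pos ht1pos _
  have hQ0 : (0:ℝ) < s ^ (1 - 1/r) := Real.rpow_pos_of_pos hs0 _
  have hR0 : (0:ℝ) < s ^ (σ - 2) := Real.rpow_pos_of_pos hs0 _
  have hCa : C * (t (j - 1)) ^ (σ - 2) ≤ C * (K₀ ^ 2 * s ^ (σ - 2)) :=
    mul_le_mul_of_nonneg_left hapow hC.le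
  have hCa0 : 0 ≤ C * (t (j - 1)) ^ (σ - 2) :=
    mul_nonneg hC.le (Real.rpow_nonneg ha0.le _)
  have hsa : s - t (j - 1) ≤ c₂ * K₀ * ((t 1) ^ (1/r) * s ^ (1 - 1/r)) := by linarith
  have hbs1 : t j - s ≤ c₂ * K₀ * ((t 1) ^ (1/r) * s ^ (1 - 1/r)) := by linarith
  have hbs2 : t j - s ≤ t m - s := by linarith
  have hsa0 : 0 ≤ s - t (j - 1) := by linarith
  have hbs0 : 0 ≤ t j - s := by linarith
  have hD0 : 0 ≤ c₂ * K₀ * ((t 1) ^ (1/r) * s ^ (1 - 1/r)) :=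
    mul_nonneg (mul_nonneg hc₂.le hK₀0.le) (mul_nonneg hP0.le hQ0.le)
  have hCK0 : 0 ≤ C * (K₀ ^ 2 * s ^ (σ - 2)) :=
    mul_nonneg hC.le (mul_nonneg (by positivity) hR0.le)
  -- bound 1
  have step1 : (s - t (j - 1)) * (t j - s) * (C * (t (j - 1)) ^ (σ - 2)) ≤
      (c₂ * K₀ * ((t 1) ^ (1/r) * s ^ (1 - 1/r))) *
        (c₂ * K₀ * ((t 1) ^ (1/r) * s ^ (1 - 1/r))) * (C * (K₀ ^ 2 * s ^ (σ - 2))) :=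
    mul_le_mul (mul_le_mul hsa hbs1 hbs0 hD0) hCa hCa0 (mul_nonneg hD0 hD0)
  have eq1 : (c₂ * K₀ * ((t 1) ^ (1/r) * s ^ (1 - 1/r))) *
        (c₂ * K₀ * ((t 1) ^ (1/r) * s ^ (1 - 1/r))) * (C * (K₀ ^ 2 * s ^ (σ - 2))) =
      (C * c₂ ^ 2 * K₀ ^ 4) *
        (((t 1) ^ (1/r) * s ^ (1 - 1/r)) * ((t 1) ^ (1/r) * s ^ (1 - 1/r)) * s ^ (σ - 2)) := by
    ring
  have hbd1 := hE.trans (step1.trans_eq eq1)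
  -- bound 2
  have step2 : (s - t (j - 1)) * (t j - s) * (C * (t (j - 1)) ^ (σ - 2)) ≤
      (c₂ * K₀ * ((t 1) ^ (1/r) * s ^ (1 - 1/r))) * (t m - s) *
        (C * (K₀ ^ 2 * s ^ (σ - 2))) :=
    mul_le_mul (mul_le_mul hsa hbs2 hbs0 hD0) hCa hCa0 (mul_nonneg hD0 htms.le)
  have eq2 : (c₂ * K₀ * ((t 1) ^ (1/r) * s ^ (1 - 1/r))) * (t m - s) *
        (C * (K₀ ^ 2 * s ^ (σ - 2))) =
      (C * c₂ * K₀ ^ 3) *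
        ((t m - s) * (t 1) ^ (1/r) * (s ^ (1 - 1/r) * s ^ (σ - 2))) := by
    ring
  have hbd2 := hE.trans (step2.trans_eq eq2)
  have hX0 : (0:ℝ) ≤
      ((t 1) ^ (1/r) * s ^ (1 - 1/r)) * ((t 1) ^ (1/r) * s ^ (1 - 1/r)) * s ^ (σ - 2) := by
    positivity
  have hY0 : (0:ℝ) ≤ (t m - s) * (t 1) ^ (1/r) * (s ^ (1 - 1/r) * s ^ (σ - 2)) :=
    mul_nonneg (mul_nonneg htms.le hP0.le) (mul_nonneg hQ0.le hR0.le)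
  have hA1 := constA1 C c₂ K₀ hC hc₂ hK₀1
  have hA2 := constA2 C c₂ K₀ hC hc₂ hK₀1
  rcases min_cases
    (((t 1) ^ (1/r) * s ^ (1 - 1/r)) * ((t 1) ^ (1/r) * s ^ (1 - 1/r)) * s ^ (σ - 2))
    ((t m - s) * (t 1) ^ (1/r) * (s ^ (1 - 1/r) * s ^ (σ - 2))) with ⟨hm, _⟩ | ⟨hm, _⟩ <;>
    rw [hm]
  · exact hbd1.trans (mul_le_mul_of_nonneg_right hA1 hX0)
  · exact hbd2.trans (mul_le_mul_of_nonneg_right hA2 hY0)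
end

section
/- Let α ∈ (0,1) and σ > 0. There exists a constant C > 0, depending only on α and σ, such that for all 0 < t₁ ≤ t_m: ∫_0^{t₁} (t_m − s)^{−α−1} (t₁ − s)(s^{σ−1} + t₁^{σ−1}) ds ≤ C · t₁^{σ−α} · (t₁/t_m)^{α+1}. -/
open MeasureTheory intervalIntegral Set

/-- the weighted-integral bound
`∫_0^{t₁}(t_m − s)^{−α−1}(t₁ − s)(s^{σ−1} + t₁^{σ−1}) ds ≤ C t₁^{σ−α}(t₁/t_m)^{α+1}`
for `0 < t₁ ≤ t_m`. -/
theorem stmt11 (α σ : ℝ) (hα : α ∈ Set.Ioo (0:ℝ) 1) (hσ : 0 < σ) :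
    ∃ C : ℝ, 0 < C ∧
      ∀ t₁ tm : ℝ, 0 < t₁ → t₁ ≤ tm →
        (∫ s in (0:ℝ)..t₁,
            (tm - s) ^ (-α - 1) * ((t₁ - s) * (s ^ (σ - 1) + t₁ ^ (σ - 1))))
          ≤ C * t₁ ^ (σ - α) * (t₁ / tm) ^ (α + 1) := by
  obtain ⟨hα0, hα1⟩ := hα
  have h1α : (0:ℝ) < 1 - α := by linarith
  set M : ℝ := max 1 (2 ^ (1 - σ)) with hMdef
  have hM1 : (1:ℝ) ≤ M := le_max_left _ _
  refine ⟨2 ^ α * (σ⁻¹ + 1) + (M + 1) / (1 - α), ?_, ?_⟩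
  · have h1 : (0:ℝ) < 2 ^ α * (σ⁻¹ + 1) := by positivity
    have h2 : (0:ℝ) < (M + 1) / (1 - α) := div_pos (by linarith) h1α
    linarith
  intro t₁ tm ht₁ htm
  have htm0 : 0 < tm := lt_of_lt_of_le ht₁ htm
  have ht2 : 0 < t₁ / 2 := by linarith
  set R : ℝ := (t₁ / tm) ^ (α + 1) with hRdef
  have hR0 : 0 ≤ R := Real.rpow_nonneg (by positivity) _
  set f : ℝ → ℝ :=
    fun s => (tm - s) ^ (-α - 1) * ((t₁ - s) * (s ^ (σ - 1) + t₁ ^ (σ - 1))) with hfdef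
  -- key pointwise bound
  have key : ∀ s, 0 ≤ s → s ≤ t₁ →
      (tm - s) ^ (-α - 1) * (t₁ - s) ≤ R * (t₁ - s) ^ (-α) := by
    intro s hs0 hs1
    rcases eq_or_lt_of_le hs1 with h | h
    · rw [h, sub_self, Real.zero_rpow (by intro hc; linarith [neg_eq_zero.mp hc] : -α ≠ 0),
        mul_zero, mul_zero]
    · have hu : 0 < t₁ - s := by linarith
      have hv : 0 < tm - s := by linarith
      have hB : 0 < (tm - s) ^ (α + 1) := Real.rpow_pos_of_pos hv _
      have hTm : 0 < tm ^ (α + 1) := Real.rpow_pos_of_pos htm0 _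
      have hU : 0 ≤ (t₁ - s) ^ (-α) := Real.rpow_nonneg hu.le _
      have hpow : (t₁ - s) ^ (α + 1) * tm ^ (α + 1) ≤ t₁ ^ (α + 1) * (tm - s) ^ (α + 1) := by
        rw [← Real.mul_rpow hu.le htm0.le, ← Real.mul_rpow ht₁.le hv.le]
        exact Real.rpow_le_rpow (by positivity) (by nlinarith) (by linarith)
      have hvs : (tm - s) ^ (-α - 1) = ((tm - s) ^ (α + 1))⁻¹ := by
        rw [show -α - 1 = -(α + 1) by ring, Real.rpow_neg hv.le]
      have hus : t₁ - s = (t₁ - s) ^ (α + 1) * (t₁ - s) ^ (-α) := by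
        rw [← Real.rpow_add hu, show α + 1 + -α = 1 by ring, Real.rpow_one]
      have hdiv : (t₁ - s) ^ (α + 1) / (tm - s) ^ (α + 1) ≤ t₁ ^ (α + 1) / tm ^ (α + 1) :=
        (div_le_div_iff₀ hB hTm).mpr (by linarith)
      calc (tm - s) ^ (-α - 1) * (t₁ - s)
          = ((t₁ - s) ^ (α + 1) / (tm - s) ^ (α + 1)) * (t₁ - s) ^ (-α) := by
            rw [hvs]; nth_rewrite 1 [hus]; ring
        _ ≤ (t₁ ^ (α + 1) / tm ^ (α + 1)) * (t₁ - s) ^ (-α) :=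
            mul_le_mul_of_nonneg_right hdiv hU
        _ = R * (t₁ - s) ^ (-α) := by
            rw [hRdef, Real.div_rpow ht₁.le htm0.le]
  -- bound on s^(σ-1) on the upper half
  have hs_bnd : ∀ s, t₁ / 2 ≤ s → s ≤ t₁ → s ^ (σ - 1) ≤ M * t₁ ^ (σ - 1) := by
    intro s hs1 hs2
    have hs0 : 0 < s := lt_of_lt_of_le ht2 hs1
    rcases le_total 1 σ with hcase | hcase
    · have h1 : s ^ (σ - 1) ≤ t₁ ^ (σ - 1) := Real.rpow_le_rpow hs0.le hs2 (by linarith)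
      nlinarith [Real.rpow_nonneg ht₁.le (σ - 1)]
    · have h1 : s ^ (σ - 1) ≤ (t₁ / 2) ^ (σ - 1) :=
        Real.rpow_le_rpow_of_nonpos ht2 hs1 (by linarith)
      have h2 : (t₁ / 2) ^ (σ - 1) = 2 ^ (1 - σ) * t₁ ^ (σ - 1) := by
        rw [div_eq_mul_inv, Real.mul_rpow ht₁.le (by norm_num),
          Real.inv_rpow (by norm_num : (0:ℝ) ≤ 2),
          ← Real.rpow_neg (by norm_num : (0:ℝ) ≤ 2), show -(σ - 1) = 1 - σ by ring]
        ring
      have h3 : 2 ^ (1 - σ) ≤ M := le_max_right _ _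
      have h4 : 0 ≤ t₁ ^ (σ - 1) := Real.rpow_nonneg ht₁.le _
      nlinarith
  -- measurability
  have hfm : Measurable f := by
    apply Measurable.mul
    · exact (measurable_const.sub measurable_id).pow_const _
    · exact (measurable_const.sub measurable_id).mul
        ((measurable_id.pow_const _).add measurable_const)
  -- comparison functions are integrable
  have I1 : IntervalIntegrable (fun s => s ^ (σ - 1)) volume 0 (t₁ / 2) :=
    intervalIntegrable_rpow' (by linarith)
  have Ig1 : IntervalIntegrable
      (fun s => R * (t₁ / 2) ^ (-α) * (s ^ (σ - 1) + t₁ ^ (σ - 1))) volume 0 (t₁ / 2) :=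
    (I1.add intervalIntegrable_const).const_mul _
  have I2 : IntervalIntegrable (fun s => (t₁ - s) ^ (-α)) volume (t₁ / 2) t₁ := by
    have h := (intervalIntegrable_rpow' (a := 0) (b := t₁ / 2)
      (r := -α) (by linarith)).comp_sub_left t₁
    rw [sub_zero, sub_half] at h
    exact h.symm
  have Ig2 : IntervalIntegrable
      (fun s => R * ((M + 1) * t₁ ^ (σ - 1)) * (t₁ - s) ^ (-α)) volume (t₁ / 2) t₁ :=
    I2.const_mul _
  -- pointwise bounds
  have bnd1 : ∀ s ∈ Icc (0:ℝ) (t₁ / 2),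
      f s ≤ R * (t₁ / 2) ^ (-α) * (s ^ (σ - 1) + t₁ ^ (σ - 1)) := by
    intro s hs
    obtain ⟨hs0, hs2⟩ := hs
    have hsum : 0 ≤ s ^ (σ - 1) + t₁ ^ (σ - 1) :=
      add_nonneg (Real.rpow_nonneg hs0 _) (Real.rpow_nonneg ht₁.le _)
    have h1 : (tm - s) ^ (-α - 1) * (t₁ - s) ≤ R * (t₁ - s) ^ (-α) :=
      key s hs0 (by linarith)
    have h2 : (t₁ - s) ^ (-α) ≤ (t₁ / 2) ^ (-α) :=
      Real.rpow_le_rpow_of_nonpos ht2 (by linarith) (by linarith)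
    calc f s = ((tm - s) ^ (-α - 1) * (t₁ - s)) * (s ^ (σ - 1) + t₁ ^ (σ - 1)) := by
          rw [hfdef]; ring
      _ ≤ (R * (t₁ - s) ^ (-α)) * (s ^ (σ - 1) + t₁ ^ (σ - 1)) :=
          mul_le_mul_of_nonneg_right h1 hsum
      _ ≤ (R * (t₁ / 2) ^ (-α)) * (s ^ (σ - 1) + t₁ ^ (σ - 1)) :=
          mul_le_mul_of_nonneg_right (mul_le_mul_of_nonneg_left h2 hR0) hsum
  have bnd2 : ∀ s ∈ Icc (t₁ / 2) t₁,
      f s ≤ R * ((M + 1) * t₁ ^ (σ - 1)) * (t₁ - s) ^ (-α) := by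
    intro s hs
    obtain ⟨hs1, hs2⟩ := hs
    have hs0 : (0:ℝ) ≤ s := by linarith
    have h1 : (tm - s) ^ (-α - 1) * (t₁ - s) ≤ R * (t₁ - s) ^ (-α) := key s hs0 hs2
    have h2 : s ^ (σ - 1) + t₁ ^ (σ - 1) ≤ (M + 1) * t₁ ^ (σ - 1) := by
      have := hs_bnd s hs1 hs2
      nlinarith [Real.rpow_nonneg ht₁.le (σ - 1)]
    have hsum : 0 ≤ s ^ (σ - 1) + t₁ ^ (σ - 1) :=
      add_nonneg (Real.rpow_nonneg hs0 _) (Real.rpow_nonneg ht₁.le _)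
    have hRU : 0 ≤ R * (t₁ - s) ^ (-α) :=
      mul_nonneg hR0 (Real.rpow_nonneg (by linarith) _)
    calc f s = ((tm - s) ^ (-α - 1) * (t₁ - s)) * (s ^ (σ - 1) + t₁ ^ (σ - 1)) := by
          rw [hfdef]; ring
      _ ≤ (R * (t₁ - s) ^ (-α)) * ((M + 1) * t₁ ^ (σ - 1)) :=
          mul_le_mul h1 h2 hsum hRU
      _ = R * ((M + 1) * t₁ ^ (σ - 1)) * (t₁ - s) ^ (-α) := by ring
  -- f is nonnegative on [0, t₁]
  have hfnn : ∀ s, 0 ≤ s → s ≤ t₁ → 0 ≤ f s := by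
    intro s hs0 hs1
    have h1 : (0:ℝ) ≤ tm - s := by linarith
    have h2 : (0:ℝ) ≤ t₁ - s := by linarith
    exact mul_nonneg (Real.rpow_nonneg h1 _)
      (mul_nonneg h2 (add_nonneg (Real.rpow_nonneg hs0 _) (Real.rpow_nonneg ht₁.le _)))
  -- integrability of f on each half
  have If1 : IntervalIntegrable f volume 0 (t₁ / 2) := by
    apply Ig1.mono_fun' hfm.aestronglyMeasurable.restrict
    filter_upwards [MeasureTheory.ae_restrict_mem measurableSet_uIoc] with s hs
    rw [Set.uIoc_of_le ht2.le] at hs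
    obtain ⟨hs0, hs2⟩ := hs
    rw [Real.norm_eq_abs, abs_of_nonneg (hfnn s hs0.le (by linarith))]
    exact bnd1 s ⟨hs0.le, hs2⟩
  have If2 : IntervalIntegrable f volume (t₁ / 2) t₁ := by
    apply Ig2.mono_fun' hfm.aestronglyMeasurable.restrict
    filter_upwards [MeasureTheory.ae_restrict_mem measurableSet_uIoc] with s hs
    rw [Set.uIoc_of_le (by linarith : t₁ / 2 ≤ t₁)] at hs
    obtain ⟨hs1, hs2⟩ := hs
    rw [Real.norm_eq_abs, abs_of_nonneg (hfnn s (by linarith) hs2)]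
    exact bnd2 s ⟨hs1.le, hs2⟩
  -- split the integral
  have hsplit : (∫ s in (0:ℝ)..t₁, f s)
      = (∫ s in (0:ℝ)..(t₁ / 2), f s) + ∫ s in (t₁ / 2)..t₁, f s :=
    (intervalIntegral.integral_add_adjacent_intervals If1 If2).symm
  -- auxiliary rpow identities
  have e1 : (t₁ / 2) ^ (-α) = 2 ^ α * t₁ ^ (-α) := by
    rw [Real.div_rpow ht₁.le (by norm_num), show (-α) = -α by rfl,
      Real.rpow_neg (by norm_num : (0:ℝ) ≤ 2), Real.rpow_neg ht₁.le]
    field_simp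
  have e2 : (t₁ / 2) ^ σ ≤ t₁ ^ σ :=
    Real.rpow_le_rpow (by positivity) (by linarith) hσ.le
  have e3 : t₁ ^ (σ - 1) * t₁ = t₁ ^ σ := by
    have h := Real.rpow_add ht₁ (σ - 1) 1
    rw [Real.rpow_one, show σ - 1 + 1 = σ by ring] at h
    exact h.symm
  have e4 : t₁ ^ (-α) * t₁ ^ σ = t₁ ^ (σ - α) := by
    rw [← Real.rpow_add ht₁, show -α + σ = σ - α by ring]
  have e6 : t₁ ^ (σ - 1) * t₁ ^ (1 - α) = t₁ ^ (σ - α) := by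
    rw [← Real.rpow_add ht₁, show σ - 1 + (1 - α) = σ - α by ring]
  -- first piece
  have c1 : (∫ s in (0:ℝ)..(t₁ / 2), R * (t₁ / 2) ^ (-α) * (s ^ (σ - 1) + t₁ ^ (σ - 1)))
      = R * (t₁ / 2) ^ (-α) * ((t₁ / 2) ^ σ / σ + t₁ ^ (σ - 1) * (t₁ / 2)) := by
    rw [intervalIntegral.integral_const_mul,
      intervalIntegral.integral_add I1 intervalIntegrable_const,
      integral_rpow (Or.inl (by linarith : (-1:ℝ) < σ - 1)),
      intervalIntegral.integral_const, show σ - 1 + 1 = σ by ring,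
      Real.zero_rpow hσ.ne', sub_zero, sub_zero, smul_eq_mul]
    ring
  have est1 : (∫ s in (0:ℝ)..(t₁ / 2), f s)
      ≤ 2 ^ α * (σ⁻¹ + 1) * t₁ ^ (σ - α) * R := by
    have m1 := intervalIntegral.integral_mono_on ht2.le If1 Ig1 bnd1
    rw [c1] at m1
    have e3' : t₁ ^ (σ - 1) * (t₁ / 2) ≤ t₁ ^ σ := by
      have : t₁ ^ (σ - 1) * (t₁ / 2) ≤ t₁ ^ (σ - 1) * t₁ :=
        mul_le_mul_of_nonneg_left (by linarith) (Real.rpow_nonneg ht₁.le _)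
      linarith [e3 ▸ this]
    have e2' : (t₁ / 2) ^ σ / σ ≤ t₁ ^ σ / σ := by
      apply div_le_div_of_nonneg_right e2 hσ.le
    have hlhs : R * (t₁ / 2) ^ (-α) * ((t₁ / 2) ^ σ / σ + t₁ ^ (σ - 1) * (t₁ / 2))
        ≤ R * (2 ^ α * t₁ ^ (-α)) * (t₁ ^ σ / σ + t₁ ^ σ) := by
      rw [e1]
      apply mul_le_mul_of_nonneg_left _ (by positivity)
      exact add_le_add e2' e3'
    have hfin : R * (2 ^ α * t₁ ^ (-α)) * (t₁ ^ σ / σ + t₁ ^ σ)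
        = 2 ^ α * (σ⁻¹ + 1) * t₁ ^ (σ - α) * R := by
      rw [← e4, div_eq_mul_inv]; ring
    linarith
  -- second piece
  have hJ : (∫ s in (t₁ / 2)..t₁, (t₁ - s) ^ (-α)) = (t₁ / 2) ^ (1 - α) / (1 - α) := by
    have h := intervalIntegral.integral_comp_sub_left (a := t₁ / 2) (b := t₁)
      (fun u : ℝ => u ^ (-α)) t₁
    rw [h, sub_self, sub_half, integral_rpow (Or.inl (by linarith : (-1:ℝ) < -α)),
      show -α + 1 = 1 - α by ring, Real.zero_rpow (by linarith : (1:ℝ) - α ≠ 0), sub_zero]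
  have c2 : (∫ s in (t₁ / 2)..t₁, R * ((M + 1) * t₁ ^ (σ - 1)) * (t₁ - s) ^ (-α))
      = R * ((M + 1) * t₁ ^ (σ - 1)) * ((t₁ / 2) ^ (1 - α) / (1 - α)) := by
    rw [intervalIntegral.integral_const_mul, hJ]
  have est2 : (∫ s in (t₁ / 2)..t₁, f s)
      ≤ (M + 1) / (1 - α) * t₁ ^ (σ - α) * R := by
    have m2 := intervalIntegral.integral_mono_on (by linarith : t₁ / 2 ≤ t₁) If2 Ig2 bnd2
    rw [c2] at m2
    have e5 : (t₁ / 2) ^ (1 - α) ≤ t₁ ^ (1 - α) :=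
      Real.rpow_le_rpow (by positivity) (by linarith) (by linarith)
    have hK : (0:ℝ) ≤ R * ((M + 1) * t₁ ^ (σ - 1)) :=
      mul_nonneg hR0 (mul_nonneg (by linarith) (Real.rpow_nonneg ht₁.le _))
    have hlhs : R * ((M + 1) * t₁ ^ (σ - 1)) * ((t₁ / 2) ^ (1 - α) / (1 - α))
        ≤ R * ((M + 1) * t₁ ^ (σ - 1)) * (t₁ ^ (1 - α) / (1 - α)) :=
      mul_le_mul_of_nonneg_left (div_le_div_of_nonneg_right e5 h1α.le) hK
    have hfin : R * ((M + 1) * t₁ ^ (σ - 1)) * (t₁ ^ (1 - α) / (1 - α))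
        = (M + 1) / (1 - α) * t₁ ^ (σ - α) * R := by
      rw [← e6]; field_simp
    linarith
  calc (∫ s in (0:ℝ)..t₁, f s)
      = (∫ s in (0:ℝ)..(t₁ / 2), f s) + ∫ s in (t₁ / 2)..t₁, f s := hsplit
    _ ≤ 2 ^ α * (σ⁻¹ + 1) * t₁ ^ (σ - α) * R + (M + 1) / (1 - α) * t₁ ^ (σ - α) * R :=
        add_le_add est1 est2
    _ = (2 ^ α * (σ⁻¹ + 1) + (M + 1) / (1 - α)) * t₁ ^ (σ - α) * R := by ring
end

section
/- (Truncation error of the semilinear discretization.) Let σ ∈ (0,1) ∪ (1,2), let the mesh be quasi-graded with parameter r ≥ 1 and constants c₁, c₂, and let u : [0,T] → ℝ be continuous, continuously differentiable on (0,T], with |u′(t)| ≤ C_u(1 + t^{σ−1}) for t ∈ (0,T]. Let f : ℝ → ℝ and F : ℝ² → ℝ satisfy |F(v,w) − f(v)| ≤ L|v − w|^q for all v, w in the range of u, for fixed L > 0 and q ≥ 1. Set σ̂ := min{σ, 1}. Then there exists C > 0, depending only on L, q, σ, r, T, C_u, c₁, c₂, such that for all 1 ≤ m ≤ M: |F(u(t_m),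 u(t_{m−1})) − f(u(t_m))| ≤ C · (t_m^{σ̂} (τ/t_m)^{1/r})^q. -/
open Set

private lemma cont_rpow (σ : ℝ) (hσ : 0 ≤ σ) : Continuous (fun t : ℝ => t ^ σ) := by
  by_cases h : σ = 0
  · simp [h, Real.rpow_zero]; exact continuous_const
  · exact continuous_iff_continuousAt.mpr fun x =>
      Real.continuousAt_rpow_const x σ (Or.inr hσ)

private lemma mvt_bound {σ C_u T : ℝ} (hσ0 : 0 < σ) (hT : 0 < T) (hCu : 0 < C_u)
    {u : ℝ → ℝ} (hc : ContinuousOn u (Icc 0 T))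
    (hd : ∀ s ∈ Ioc (0:ℝ) T, DifferentiableAt ℝ u s)
    (hb : ∀ s ∈ Ioc (0:ℝ) T, |deriv u s| ≤ C_u * (1 + s ^ (σ - 1)))
    {a b : ℝ} (ha : 0 ≤ a) (hab : a ≤ b) (hbT : b ≤ T) :
    |u b - u a| ≤ C_u * ((b - a) + (b ^ σ - a ^ σ) / σ) := by
  set φ : ℝ → ℝ := fun t => C_u * (t + t ^ σ / σ) with hφdef
  have hφcont : Continuous φ := by
    exact continuous_const.mul (continuous_id.add ((cont_rpow σ hσ0.le).div_const σ))
  have hφderiv : ∀ x : ℝ, 0 < x → HasDerivAt φ (C_u * (1 + x ^ (σ - 1))) x := by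
    intro x hx
    have h1 : HasDerivAt (fun t : ℝ => t ^ σ) (σ * x ^ (σ - 1)) x :=
      Real.hasDerivAt_rpow_const (Or.inl hx.ne')
    have h2 := ((hasDerivAt_id x).add (h1.div_const σ)).const_mul C_u
    have : C_u * (1 + σ * x ^ (σ - 1) / σ) = C_u * (1 + x ^ (σ - 1)) := by
      field_simp
    rw [this] at h2
    exact h2
  have key : ∀ ε : ℝ, ε = 1 ∨ ε = -1 →
      MonotoneOn (fun t => φ t + ε * u t) (Icc 0 T) := by
    intro ε hε
    apply monotoneOn_of_deriv_nonneg (convex_Icc 0 T)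
    · exact hφcont.continuousOn.add (continuousOn_const.mul hc)
    · rw [interior_Icc]
      intro x hx
      exact (((hφderiv x hx.1).differentiableAt).add
        (((hd x ⟨hx.1, hx.2.le⟩)).const_mul ε)).differentiableWithinAt
    · rw [interior_Icc]
      intro x hx
      have hxm : x ∈ Ioc (0:ℝ) T := ⟨hx.1, hx.2.le⟩
      have hdu := hd x hxm
      have hda : HasDerivAt (fun t => φ t + ε * u t)
          (C_u * (1 + x ^ (σ - 1)) + ε * deriv u x) x :=
        (hφderiv x hx.1).add ((hdu.hasDerivAt).const_mul ε)
      rw [hda.deriv]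
      have hbd := hb x hxm
      have h1 := abs_le.mp hbd
      rcases hε with rfl | rfl <;> [skip; skip] <;> nlinarith [h1.1, h1.2]
  have haI : a ∈ Icc (0:ℝ) T := ⟨ha, hab.trans hbT⟩
  have hbI : b ∈ Icc (0:ℝ) T := ⟨ha.trans hab, hbT⟩
  have e1 := key 1 (Or.inl rfl) haI hbI hab
  have e2 := key (-1) (Or.inr rfl) haI hbI hab
  simp only [one_mul, neg_one_mul] at e1 e2
  have hφba : φ b - φ a = C_u * ((b - a) + (b ^ σ - a ^ σ) / σ) := by
    simp only [hφdef]; ring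
  rw [abs_sub_le_iff]
  constructor <;> linarith

private lemma rpow_concave_bound {σ : ℝ} (hσ0 : 0 < σ) (hσ1 : σ < 1)
    {a b : ℝ} (ha : 0 < a) (hab : a ≤ b) :
    b ^ σ - a ^ σ ≤ σ * a ^ (σ - 1) * (b - a) := by
  set ψ : ℝ → ℝ := fun t => σ * a ^ (σ - 1) * t - t ^ σ with hψ
  have hmono : MonotoneOn ψ (Icc a b) := by
    apply monotoneOn_of_deriv_nonneg (convex_Icc a b)
    · exact ((continuous_const.mul continuous_id).sub (cont_rpow σ hσ0.le)).continuousOn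
    · rw [interior_Icc]
      intro x hx
      have hx0 : (0:ℝ) < x := lt_trans ha hx.1
      exact (((hasDerivAt_id x).const_mul (σ * a ^ (σ-1))).sub
        (Real.hasDerivAt_rpow_const (Or.inl hx0.ne'))).differentiableAt.differentiableWithinAt
    · rw [interior_Icc]
      intro x hx
      have hx0 : (0:ℝ) < x := lt_trans ha hx.1
      have hda : HasDerivAt ψ (σ * a ^ (σ - 1) * 1 - σ * x ^ (σ - 1)) x :=
        ((hasDerivAt_id x).const_mul (σ * a ^ (σ-1))).sub
          (Real.hasDerivAt_rpow_const (Or.inl hx0.ne'))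
      rw [hda.deriv]
      have hle : x ^ (σ - 1) ≤ a ^ (σ - 1) :=
        Real.rpow_le_rpow_of_nonpos ha hx.1.le (by linarith)
      nlinarith
  have := hmono ⟨le_refl a, hab⟩ ⟨hab, le_refl b⟩ hab
  simp only [hψ] at this
  linarith

private lemma rpow_convex_bound {σ T : ℝ} (hσ1 : 1 < σ) (hT : 0 < T)
    {a b : ℝ} (ha : 0 ≤ a) (hab : a ≤ b) (hbT : b ≤ T) :
    b ^ σ - a ^ σ ≤ σ * T ^ (σ - 1) * (b - a) := by
  set ψ : ℝ → ℝ := fun t => σ * T ^ (σ - 1) * t - t ^ σ with hψ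
  have hmono : MonotoneOn ψ (Icc 0 T) := by
    apply monotoneOn_of_deriv_nonneg (convex_Icc 0 T)
    · exact ((continuous_const.mul continuous_id).sub
        (cont_rpow σ (by linarith))).continuousOn
    · rw [interior_Icc]
      intro x hx
      exact (((hasDerivAt_id x).const_mul (σ * T ^ (σ-1))).sub
        (Real.hasDerivAt_rpow_const (Or.inl hx.1.ne'))).differentiableAt.differentiableWithinAt
    · rw [interior_Icc]
      intro x hx
      have hda : HasDerivAt ψ (σ * T ^ (σ - 1) * 1 - σ * x ^ (σ - 1)) x :=
        ((hasDerivAt_id x).const_mul (σ * T ^ (σ-1))).sub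
          (Real.hasDerivAt_rpow_const (Or.inl hx.1.ne'))
      rw [hda.deriv]
      have hle : x ^ (σ - 1) ≤ T ^ (σ - 1) :=
        Real.rpow_le_rpow hx.1.le hx.2.le (by linarith)
      nlinarith
  have := hmono ⟨ha, hab.trans hbT⟩ ⟨ha.trans hab, hbT⟩ hab
  simp only [hψ] at this
  linarith

private lemma mono_aux {M : ℕ} {t : ℕ → ℝ}
    (hstep : ∀ j, 1 ≤ j → j ≤ M → t (j - 1) < t j) :
    ∀ i j, i ≤ j → j ≤ M → t i ≤ t j := by
  intro i j hij hjM
  induction j with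
  | zero => interval_cases i; rfl
  | succ k ih =>
    rcases Nat.eq_or_lt_of_le hij with h | h
    · rw [h]
    · have hik : i ≤ k := Nat.lt_succ_iff.mp h
      have h1 := ih hik (le_trans (Nat.le_succ k) hjM)
      have h2 := hstep (k+1) (Nat.succ_le_succ (Nat.zero_le k)) hjM
      simp only [Nat.add_sub_cancel] at h2
      linarith

set_option maxHeartbeats 1600000 in
/-- truncation error of the semilinear discretization:
if `|F(v,w) − f(v)| ≤ L|v−w|^q` on the range of `u`, then
`|F(u(t_m), u(t_{m−1})) − f(u(t_m))| ≤ C (t_m^{σ̂}(τ/t_m)^{1/r})^q`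
with `σ̂ = min{σ,1}`. -/
theorem stmt13 (σ r c₁ c₂ C_u L q T : ℝ)
    (hσ : σ ∈ Set.Ioo (0:ℝ) 1 ∪ Set.Ioo (1:ℝ) 2) (hr : 1 ≤ r)
    (hc₁ : 0 < c₁) (hc₂ : 0 < c₂) (hCu : 0 < C_u) (hL : 0 < L) (hq : 1 ≤ q)
    (hT : 0 < T) :
    ∃ C : ℝ, 0 < C ∧
      ∀ (M : ℕ) (t : ℕ → ℝ), t 0 = 0 → t M = T →
        (∀ j, 1 ≤ j → j ≤ M → t (j - 1) < t j) →
        c₁ * (M : ℝ) ^ (-r) ≤ t 1 → t 1 ≤ c₂ * (M : ℝ) ^ (-r) →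
        (∀ j, 1 ≤ j → j ≤ M →
          t j - t (j - 1) ≤ c₂ * (t 1) ^ (1 / r) * (t j) ^ (1 - 1 / r)) →
        ∀ u : ℝ → ℝ,
          ContinuousOn u (Set.Icc 0 T) →
          (∀ s ∈ Set.Ioc (0:ℝ) T, DifferentiableAt ℝ u s) →
          (∀ s ∈ Set.Ioc (0:ℝ) T, |deriv u s| ≤ C_u * (1 + s ^ (σ - 1))) →
          ∀ f : ℝ → ℝ, ∀ F : ℝ → ℝ → ℝ,
            (∀ v w : ℝ, v ∈ u '' Set.Icc 0 T → w ∈ u '' Set.Icc 0 T →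
              |F v w - f v| ≤ L * |v - w| ^ q) →
            ∀ m, 1 ≤ m → m ≤ M →
              |F (u (t m)) (u (t (m - 1))) - f (u (t m))| ≤
                C * ((t m) ^ (min σ 1) * (t 1 / t m) ^ (1 / r)) ^ q := by
  have hσ0 : 0 < σ := by rcases hσ with h | h; exacts [h.1, lt_trans one_pos h.1]
  set σ' := min σ 1 with hσ'def
  have hσ'0 : 0 < σ' := lt_min hσ0 one_pos
  have hσ'1 : σ' ≤ 1 := min_le_right _ _
  set K := C_u * c₂ * (T ^ (1 - σ') + 2 + 2 / σ + T ^ (σ - 1)) + 1 with hKdef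
  have hK0 : 0 < K := by positivity
  refine ⟨L * K ^ q, by positivity, ?_⟩
  intro M t ht0 htM hstep hτ1 hτ2 hgrade u hu hud hub f F hF m hm1 hmM
  have hmono := mono_aux hstep
  have hM1 : 1 ≤ M := hm1.trans hmM
  have hτpos : 0 < t 1 := by have := hstep 1 le_rfl hM1; simpa [ht0] using this
  have hτ_le : t 1 ≤ t m := hmono 1 m hm1 hmM
  have htm_pos : 0 < t m := lt_of_lt_of_le hτpos hτ_le
  have htm_le_T : t m ≤ T := by have := hmono m M hmM le_rfl; rwa [htM] at this
  have ht0m : 0 ≤ t (m - 1) := by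
    have := hmono 0 (m - 1) (Nat.zero_le _) (le_trans (Nat.sub_le m 1) hmM)
    rwa [ht0] at this
  have htm1_le : t (m - 1) ≤ t m := (hstep m hm1 hmM).le
  have hr0 : 0 < r := lt_of_lt_of_le one_pos hr
  have h1r0 : 0 < 1 / r := by positivity
  set A := (t m) ^ σ' * (t 1 / t m) ^ (1 / r) with hAdef
  have hX0 : 0 < (t 1 / t m) ^ (1 / r) := Real.rpow_pos_of_pos (div_pos hτpos htm_pos) _
  have hA0 : 0 < A := mul_pos (Real.rpow_pos_of_pos htm_pos _) hX0
  -- key mesh identity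
  have hid : (t 1) ^ (1 / r) * (t m) ^ (1 - 1 / r) = (t 1 / t m) ^ (1 / r) * t m := by
    rw [Real.div_rpow hτpos.le htm_pos.le, Real.rpow_sub htm_pos, Real.rpow_one]
    field_simp
  have hτm := hgrade m hm1 hmM
  rw [mul_assoc, hid, ← mul_assoc] at hτm
  -- bound t m ≤ T^(1-σ') * (t m)^σ'
  have htm_split : t m ≤ T ^ (1 - σ') * (t m) ^ σ' := by
    have e1 : t m = (t m) ^ (1 - σ') * (t m) ^ σ' := by
      rw [← Real.rpow_add htm_pos]; norm_num
    have e2 : (t m) ^ (1 - σ') ≤ T ^ (1 - σ') :=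
      Real.rpow_le_rpow htm_pos.le htm_le_T (by linarith)
    calc t m = (t m) ^ (1 - σ') * (t m) ^ σ' := e1
      _ ≤ T ^ (1 - σ') * (t m) ^ σ' :=
        mul_le_mul_of_nonneg_right e2 (Real.rpow_pos_of_pos htm_pos _).le
  have h1 : t m - t (m - 1) ≤ c₂ * T ^ (1 - σ') * A := by
    calc t m - t (m - 1) ≤ c₂ * (t 1 / t m) ^ (1 / r) * t m := hτm
      _ ≤ c₂ * (t 1 / t m) ^ (1 / r) * (T ^ (1 - σ') * (t m) ^ σ') :=
        mul_le_mul_of_nonneg_left htm_split (by positivity)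
      _ = c₂ * T ^ (1 - σ') * A := by rw [hAdef]; ring
  have hTσ : (0:ℝ) ≤ T ^ (σ - 1) := (Real.rpow_pos_of_pos hT _).le
  have h2σ : (0:ℝ) ≤ 2 / σ := by positivity
  -- term 2
  have h2 : ((t m) ^ σ - (t (m - 1)) ^ σ) / σ ≤ c₂ * (2 + 2 / σ + T ^ (σ - 1)) * A := by
    rcases hσ with hσlt | hσgt
    · -- σ < 1, σ' = σ
      have hσ'eq : σ' = σ := min_eq_left hσlt.2.le
      rcases le_or_gt (t m / 2) (t (m - 1)) with hcase | hcase
      · -- t_{m-1} ≥ t_m / 2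
        have htm1_pos : 0 < t (m - 1) := lt_of_lt_of_le (by linarith) hcase
        have hcc := rpow_concave_bound hσlt.1 hσlt.2 htm1_pos htm1_le
        have hanti : (t (m - 1)) ^ (σ - 1) ≤ (t m / 2) ^ (σ - 1) :=
          Real.rpow_le_rpow_of_nonpos (by linarith) hcase (by linarith [hσlt.2])
        have hhalf : (t m / 2) ^ (σ - 1) = (t m) ^ (σ - 1) * ((2:ℝ) ^ (σ - 1))⁻¹ := by
          rw [Real.div_rpow htm_pos.le (by norm_num), div_eq_mul_inv]
        have h2le : ((2:ℝ) ^ (σ - 1))⁻¹ ≤ 2 := by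
          have e : ((2:ℝ) ^ (σ - 1))⁻¹ = 2 ^ (1 - σ) := by
            rw [← Real.rpow_neg (by norm_num : (0:ℝ) ≤ 2)]; norm_num
          rw [e]
          calc (2:ℝ) ^ (1 - σ) ≤ 2 ^ (1:ℝ) :=
            Real.rpow_le_rpow_of_exponent_le (by norm_num) (by linarith [hσlt.1])
            _ = 2 := Real.rpow_one 2
        have htmσ1 : (0:ℝ) ≤ (t m) ^ (σ - 1) := (Real.rpow_pos_of_pos htm_pos _).le
        have hstep2 : (t (m - 1)) ^ (σ - 1) ≤ 2 * (t m) ^ (σ - 1) := by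
          rw [hhalf] at hanti
          nlinarith [hanti, h2le, htmσ1]
        have hmulσ : (t m) ^ (σ - 1) * t m = (t m) ^ σ := by
          rw [← Real.rpow_add_one htm_pos.ne']; norm_num
        have hτm_nonneg : (0:ℝ) ≤ t m - t (m - 1) := by linarith
        have hbound : (t m) ^ σ - (t (m - 1)) ^ σ ≤ 2 * σ * c₂ * A := by
          calc (t m) ^ σ - (t (m - 1)) ^ σ
              ≤ σ * (t (m - 1)) ^ (σ - 1) * (t m - t (m - 1)) := hcc
            _ ≤ σ * (2 * (t m) ^ (σ - 1)) * (t m - t (m - 1)) := by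
                apply mul_le_mul_of_nonneg_right _ hτm_nonneg
                exact mul_le_mul_of_nonneg_left hstep2 hσ0.le
            _ ≤ σ * (2 * (t m) ^ (σ - 1)) * (c₂ * (t 1 / t m) ^ (1 / r) * t m) := by
                apply mul_le_mul_of_nonneg_left hτm (by positivity)
            _ = 2 * σ * c₂ * (((t m) ^ (σ - 1) * t m) * (t 1 / t m) ^ (1 / r)) := by ring
            _ = 2 * σ * c₂ * A := by rw [hmulσ, hAdef, hσ'eq]
        have hco : 2 * c₂ ≤ c₂ * (2 + 2 / σ + T ^ (σ - 1)) := by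
          nlinarith [mul_nonneg hc₂.le (add_nonneg h2σ hTσ)]
        calc ((t m) ^ σ - (t (m - 1)) ^ σ) / σ ≤ 2 * c₂ * A := by
              rw [div_le_iff₀ hσ0]; nlinarith [hbound]
          _ ≤ c₂ * (2 + 2 / σ + T ^ (σ - 1)) * A :=
            mul_le_mul_of_nonneg_right hco hA0.le
      · -- t_{m-1} < t_m / 2
        have hlb : (1:ℝ) ≤ 2 * c₂ * (t 1 / t m) ^ (1 / r) := by
          have h' : t m / 2 < c₂ * (t 1 / t m) ^ (1 / r) * t m := by
            have : t m / 2 < t m - t (m - 1) := by linarith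
            linarith [hτm]
          have h'' : (1 / 2 : ℝ) * t m < (c₂ * (t 1 / t m) ^ (1 / r)) * t m := by
            linarith
          have h3 := (mul_lt_mul_iff_left₀ htm_pos).mp h''
          linarith
        have htm1σ : (0:ℝ) ≤ (t (m - 1)) ^ σ := Real.rpow_nonneg ht0m σ
        have htmσ : (0:ℝ) < (t m) ^ σ := Real.rpow_pos_of_pos htm_pos σ
        have hbound : (t m) ^ σ - (t (m - 1)) ^ σ ≤ 2 * c₂ * A := by
          calc (t m) ^ σ - (t (m - 1)) ^ σ ≤ (t m) ^ σ := by linarith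
            _ = (t m) ^ σ * 1 := (mul_one _).symm
            _ ≤ (t m) ^ σ * (2 * c₂ * (t 1 / t m) ^ (1 / r)) :=
                mul_le_mul_of_nonneg_left hlb htmσ.le
            _ = 2 * c₂ * A := by rw [hAdef, hσ'eq]; ring
        have hco : 2 * c₂ * (1 / σ) ≤ c₂ * (2 + 2 / σ + T ^ (σ - 1)) := by
          have e : 2 * c₂ * (1 / σ) = c₂ * (2 / σ) := by field_simp
          nlinarith [mul_nonneg hc₂.le hTσ, mul_pos hc₂ hσ0, e]
        calc ((t m) ^ σ - (t (m - 1)) ^ σ) / σ ≤ (2 * c₂ * A) / σ := by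
              gcongr
          _ = 2 * c₂ * (1 / σ) * A := by ring
          _ ≤ c₂ * (2 + 2 / σ + T ^ (σ - 1)) * A :=
            mul_le_mul_of_nonneg_right hco hA0.le
    · -- σ > 1, σ' = 1
      have hσ'eq : σ' = 1 := min_eq_right hσgt.1.le
      have hcv := rpow_convex_bound hσgt.1 hT ht0m htm1_le htm_le_T
      have hbound : (t m) ^ σ - (t (m - 1)) ^ σ ≤ σ * (c₂ * T ^ (σ - 1) * A) := by
        calc (t m) ^ σ - (t (m - 1)) ^ σ
            ≤ σ * T ^ (σ - 1) * (t m - t (m - 1)) := hcv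
          _ ≤ σ * T ^ (σ - 1) * (c₂ * (t 1 / t m) ^ (1 / r) * t m) := by
              apply mul_le_mul_of_nonneg_left hτm (by positivity)
          _ = σ * (c₂ * T ^ (σ - 1) * A) := by
              rw [hAdef, hσ'eq, Real.rpow_one]; ring
      have hco : c₂ * T ^ (σ - 1) ≤ c₂ * (2 + 2 / σ + T ^ (σ - 1)) := by
        nlinarith [mul_nonneg hc₂.le (add_nonneg (by norm_num : (0:ℝ) ≤ 2) h2σ)]
      calc ((t m) ^ σ - (t (m - 1)) ^ σ) / σ ≤ c₂ * T ^ (σ - 1) * A := by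
            rw [div_le_iff₀ hσ0]; nlinarith [hbound]
        _ ≤ c₂ * (2 + 2 / σ + T ^ (σ - 1)) * A :=
          mul_le_mul_of_nonneg_right hco hA0.le
  -- combine
  have hΔ := mvt_bound hσ0 hT hCu hu hud hub ht0m htm1_le htm_le_T
  have hsum : (t m - t (m - 1)) + ((t m) ^ σ - (t (m - 1)) ^ σ) / σ ≤
      c₂ * (T ^ (1 - σ') + 2 + 2 / σ + T ^ (σ - 1)) * A := by
    calc (t m - t (m - 1)) + ((t m) ^ σ - (t (m - 1)) ^ σ) / σ
        ≤ c₂ * T ^ (1 - σ') * A + c₂ * (2 + 2 / σ + T ^ (σ - 1)) * A := add_le_add h1 h2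
      _ = c₂ * (T ^ (1 - σ') + 2 + 2 / σ + T ^ (σ - 1)) * A := by ring
  have hΔKA : |u (t m) - u (t (m - 1))| ≤ K * A := by
    calc |u (t m) - u (t (m - 1))|
        ≤ C_u * ((t m - t (m - 1)) + ((t m) ^ σ - (t (m - 1)) ^ σ) / σ) := hΔ
      _ ≤ C_u * (c₂ * (T ^ (1 - σ') + 2 + 2 / σ + T ^ (σ - 1)) * A) :=
          mul_le_mul_of_nonneg_left hsum hCu.le
      _ = (K - 1) * A := by rw [hKdef]; ring
      _ ≤ K * A := mul_le_mul_of_nonneg_right (by linarith) hA0.le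
  have hmem1 : u (t m) ∈ u '' Set.Icc 0 T := ⟨t m, ⟨htm_pos.le, htm_le_T⟩, rfl⟩
  have hmem2 : u (t (m - 1)) ∈ u '' Set.Icc 0 T :=
    ⟨t (m - 1), ⟨ht0m, htm1_le.trans htm_le_T⟩, rfl⟩
  have hFf := hF (u (t m)) (u (t (m - 1))) hmem1 hmem2
  have hq0 : (0:ℝ) ≤ q := by linarith
  have hpow : |u (t m) - u (t (m - 1))| ^ q ≤ (K * A) ^ q :=
    Real.rpow_le_rpow (abs_nonneg _) hΔKA hq0
  have hmulpow : (K * A) ^ q = K ^ q * A ^ q := Real.mul_rpow hK0.le hA0.le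
  calc |F (u (t m)) (u (t (m - 1))) - f (u (t m))|
      ≤ L * |u (t m) - u (t (m - 1))| ^ q := hFf
    _ ≤ L * ((K * A) ^ q) := mul_le_mul_of_nonneg_left hpow hL.le
    _ = L * K ^ q * A ^ q := by rw [hmulpow]; ring
end

section
/- (Sign inequality for the L1 operator.) Let α ∈ (0,1) and fix any mesh 0 = t_0 < t_1 < ⋯ < t_M = T. For a sequence (V^j)_{j=0}^M, define ς^m := 1 if V^m ≥ 0 and ς^m := −1 otherwise, and let (|V|^j) denote the sequence of absolute values (|V^j|). Then for every 1 ≤ m ≤ M: ς^m · δ^α V^m ≥ δ^α |V|^m. -/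
/-- Abel-type summation-by-parts identity. -/
lemma abel_aux (b W : ℕ → ℝ) : ∀ m : ℕ, 1 ≤ m →
    ∑ j ∈ Finset.Icc 1 m, (W j - W (j - 1)) * b j
      = W m * b m - W 0 * b 1 - ∑ j ∈ Finset.Ico 1 m, W j * (b (j + 1) - b j) := by
  intro m hm
  induction m, hm using Nat.le_induction with
  | base => simp; ring
  | succ n hn ih =>
    rw [Finset.sum_Icc_succ_top (by omega), Finset.sum_Ico_succ_top (by omega), ih]
    simp only [Nat.add_sub_cancel]
    ring

/-- sign inequality for the L1 operator:
`ς^m δ^α V^m ≥ δ^α |V|^m`, where `ς^m = sign(V^m)`. -/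
theorem stmt15 (α T : ℝ) (hα : α ∈ Set.Ioo (0:ℝ) 1) (hT : 0 < T)
    (M : ℕ) (t : ℕ → ℝ) (ht0 : t 0 = 0) (htT : t M = T)
    (hmono : ∀ j, 1 ≤ j → j ≤ M → t (j - 1) < t j)
    (V : ℕ → ℝ) (m : ℕ) (hm1 : 1 ≤ m) (hmM : m ≤ M) :
    (if 0 ≤ V m then (1:ℝ) else -1) * l1 α t V m ≥
      l1 α t (fun j => |V j|) m := by
  obtain ⟨hα0, hα1⟩ := hα
  -- strict monotonicity of the mesh
  have hts : ∀ j, j ≤ M → ∀ i, i < j → t i < t j := by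
    intro j
    induction j with
    | zero => intro _ i hi; omega
    | succ n ih =>
      intro hj i hi
      have hn : t n < t (n + 1) := by
        have := hmono (n + 1) (by omega) hj
        simpa using this
      rcases Nat.lt_succ_iff_lt_or_eq.mp hi with h | h
      · exact lt_trans (ih (by omega) i h) hn
      · exact h ▸ hn
  set c : ℝ := 1 / Real.Gamma (1 - α) with hc
  have hcpos : 0 < c := by
    have : 0 < Real.Gamma (1 - α) := Real.Gamma_pos_of_pos (by linarith)
    positivity
  set k : ℝ → ℝ := fun s => (t m - s) ^ (-α) with hk
  set b : ℕ → ℝ := fun j => (∫ s in (t (j - 1))..(t j), k s) / (t j - t (j - 1)) with hb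
  -- k is interval integrable on every interval
  have hint : ∀ x y : ℝ, IntervalIntegrable k MeasureTheory.volume x y := by
    intro x y
    have h1 : IntervalIntegrable (fun u : ℝ => u ^ (-α)) MeasureTheory.volume (t m - x) (t m - y) :=
      intervalIntegral.intervalIntegrable_rpow' (by linarith)
    have h2 := h1.comp_sub_left (t m)
    simpa using h2
  -- rewrite l1 with b
  have hl1 : ∀ X : ℕ → ℝ, l1 α t X m = c * ∑ j ∈ Finset.Icc 1 m, (X j - X (j - 1)) * b j := by
    intro X
    unfold l1
    rw [← hc]
    congr 1
    refine Finset.sum_congr rfl fun j _ => ?_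
    simp only [hb]
    rw [div_mul_eq_mul_div, mul_div_assoc]
  -- b 1 nonneg
  have hb1 : 0 ≤ b 1 := by
    have ht01 : t 0 < t 1 := hts 1 (by omega) 0 (by omega)
    have hI : 0 ≤ ∫ s in (t 0)..(t 1), k s := by
      apply intervalIntegral.integral_nonneg ht01.le
      intro u hu
      have h1m : t 1 ≤ t m := by
        rcases eq_or_lt_of_le hm1 with h | h
        · rw [← h]
        · exact (hts m hmM 1 h).le
      have : 0 ≤ t m - u := by
        have := hu.2; linarith
      exact Real.rpow_nonneg this _
    simp only [hb]
    exact div_nonneg hI (by simpa using sub_nonneg.mpr ht01.le)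
  -- b is monotone below m
  have hbmono : ∀ j, 1 ≤ j → j + 1 ≤ m → b j ≤ b (j + 1) := by
    intro j hj hjm
    have h01 : t (j - 1) < t j := hts j (by omega) (j - 1) (by omega)
    have h12 : t j < t (j + 1) := hts (j + 1) (by omega) j (by omega)
    have hjltm : t j < t m := hts m hmM j (by omega)
    have h2m : t (j + 1) ≤ t m := by
      rcases eq_or_lt_of_le hjm with h | h
      · rw [h]
      · exact (hts m hmM (j + 1) h).le
    -- first: average over [t(j-1), t j] ≤ k (t j)
    have hA : (∫ s in (t (j - 1))..(t j), k s) ≤ k (t j) * (t j - t (j - 1)) := by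
      have hmono1 : ∀ u ∈ Set.Icc (t (j - 1)) (t j), k u ≤ k (t j) := by
        intro u hu
        have hx : 0 < t m - t j := by linarith
        have hxy : t m - t j ≤ t m - u := by have := hu.2; linarith
        exact Real.rpow_le_rpow_of_nonpos hx hxy (by linarith)
      have := intervalIntegral.integral_mono_on h01.le (hint _ _)
        (intervalIntegrable_const (c := k (t j))) hmono1
      simpa [mul_comm] using this
    -- second: k (t j) ≤ average over [t j, t (j+1)]
    have hB : k (t j) * (t (j + 1) - t j) ≤ ∫ s in (t j)..(t (j + 1)), k s := by
      have hae : (fun _ : ℝ => k (t j)) ≤ᵐ[MeasureTheory.volume.restrict (Set.Icc (t j) (t (j + 1)))] k := by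
        have h0 : ∀ᵐ s ∂(MeasureTheory.volume : MeasureTheory.Measure ℝ), s ≠ t m := by
          refine MeasureTheory.ae_iff.2 ?_
          have : {s : ℝ | ¬ s ≠ t m} = {t m} := by ext s; simp
          rw [this]
          simp
        filter_upwards [MeasureTheory.ae_restrict_mem measurableSet_Icc,
          MeasureTheory.ae_restrict_of_ae h0] with s hs hne
        have hsm : s < t m := lt_of_le_of_ne (le_trans hs.2 h2m) hne
        have hx : 0 < t m - s := by linarith
        have hxy : t m - s ≤ t m - t j := by have := hs.1; linarith
        exact Real.rpow_le_rpow_of_nonpos hx hxy (by linarith)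
      have := intervalIntegral.integral_mono_ae_restrict h12.le
        (intervalIntegrable_const (c := k (t j))) (hint _ _) hae
      simpa [mul_comm] using this
    have hτ1 : 0 < t j - t (j - 1) := by linarith
    have hτ2 : 0 < t (j + 1) - t j := by linarith
    have hbj : b j ≤ k (t j) := by
      simp only [hb]
      rw [div_le_iff₀ hτ1]
      exact hA
    have hbj1 : k (t j) ≤ b (j + 1) := by
      simp only [hb, Nat.add_sub_cancel]
      rw [le_div_iff₀ hτ2]
      exact hB
    exact le_trans hbj hbj1
  -- set up the sign and W
  set s : ℝ := if 0 ≤ V m then (1 : ℝ) else -1 with hs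
  have hsabs : |s| = 1 := by
    simp only [hs]; split <;> simp
  set W : ℕ → ℝ := fun j => s * V j - |V j| with hW
  have hWle : ∀ j, W j ≤ 0 := by
    intro j
    have : s * V j ≤ |s * V j| := le_abs_self _
    have habs : |s * V j| = |V j| := by rw [abs_mul, hsabs, one_mul]
    simp only [hW]
    linarith [this, habs.le, habs.ge]
  have hWm : W m = 0 := by
    simp only [hW, hs]
    split_ifs with h
    · rw [abs_of_nonneg h]; ring
    · rw [abs_of_neg (not_le.mp h)]; ring
  -- the key computation
  rw [ge_iff_le, ← sub_nonneg, hl1 V, hl1 (fun j => |V j|)]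
  have hkey : s * (c * ∑ j ∈ Finset.Icc 1 m, (V j - V (j - 1)) * b j)
      - c * ∑ j ∈ Finset.Icc 1 m, ((fun j => |V j|) j - (fun j => |V j|) (j - 1)) * b j
      = c * ∑ j ∈ Finset.Icc 1 m, (W j - W (j - 1)) * b j := by
    rw [← mul_assoc, mul_comm s c, mul_assoc, ← mul_sub, Finset.mul_sum, ← Finset.sum_sub_distrib]
    congr 1
    refine Finset.sum_congr rfl fun j _ => ?_
    simp only [hW]
    ring
  rw [hkey, abel_aux b W m hm1, hWm]
  have hsum : ∑ j ∈ Finset.Ico 1 m, W j * (b (j + 1) - b j) ≤ 0 := by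
    apply Finset.sum_nonpos
    intro j hj
    rw [Finset.mem_Ico] at hj
    have h1 : W j ≤ 0 := hWle j
    have h2 : 0 ≤ b (j + 1) - b j := sub_nonneg.mpr (hbmono j hj.1 (by omega))
    exact mul_nonpos_of_nonpos_of_nonneg h1 h2
  have hW0 : W 0 ≤ 0 := hWle 0
  have : 0 ≤ 0 * b m - W 0 * b 1 - ∑ j ∈ Finset.Ico 1 m, W j * (b (j + 1) - b j) := by
    have h1 : 0 ≤ -(W 0 * b 1) := by
      rw [neg_nonneg]
      exact mul_nonpos_of_nonpos_of_nonneg hW0 hb1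
    linarith
  exact mul_nonneg hcpos.le this
end

section
/- (Discrete error inequality.) Let α ∈ (0,1), λ0, λ1 ≥ 0, and fix any mesh 0 = t_0 < t_1 < ⋯ < t_M = T. Let F : ℝ² → ℝ be such that for each fixed w ∈ ℝ the map v ↦ F(v, w) + λ0 v is nondecreasing, and |F(v, w + ω) − F(v, w)| ≤ λ1|ω| for all v, w, ω ∈ ℝ. Suppose the sequences (u^m), (e^m), (ρ^m) satisfy e^0 = 0 and δ^α e^m + F(u^m + e^m, u^{m−1} + e^{m−1}) − F(u^m, u^{m−1}) = ρ^m for all 1 ≤ m ≤ M. Then for all 1 ≤ m ≤ M: δ^α |e|^m − λ0|e^m| − λ1|e^{m−1}| ≤ |ρ^m|, where (|e|^j) denotes the sequence of absolute values (|e^j|). -/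
open MeasureTheory intervalIntegral Finset

/-- Abel-type summation identity. -/
lemma abel_range (a b : ℕ → ℝ) (m : ℕ) :
    ∑ j ∈ Finset.range (m + 1), a (j + 1) * (b j - b (j + 1))
      = a 1 * b 0 - a (m + 1) * b (m + 1)
        + ∑ j ∈ Finset.range (m + 1), (if 1 ≤ j then (a (j + 1) - a j) * b j else 0) := by
  induction m with
  | zero => simp; ring
  | succ n ih =>
    rw [Finset.sum_range_succ, Finset.sum_range_succ
      (f := fun j => if 1 ≤ j then (a (j + 1) - a j) * b j else 0), ih,
      if_pos (by omega : 1 ≤ n + 1)]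
    ring

lemma abel_nonneg (a b : ℕ → ℝ) (m : ℕ) (hm : 1 ≤ m)
    (hb : ∀ j, 0 ≤ b j) (hb0 : b 0 = 0) (hbm : b m = 0)
    (ha : ∀ j, 1 ≤ j → j + 1 ≤ m → a j ≤ a (j + 1)) :
    0 ≤ ∑ j ∈ Finset.range m, a (j + 1) * (b j - b (j + 1)) := by
  obtain ⟨n, rfl⟩ : ∃ n, m = n + 1 := ⟨m - 1, by omega⟩
  rw [abel_range, hb0, hbm]
  have h : 0 ≤ ∑ j ∈ Finset.range (n + 1),
      (if 1 ≤ j then (a (j + 1) - a j) * b j else 0) := by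
    apply Finset.sum_nonneg
    intro j hj
    rw [Finset.mem_range] at hj
    split_ifs with hh
    · exact mul_nonneg (by linarith [ha j hh (by omega)]) (hb j)
    · exact le_rfl
  linarith

/-- discrete error inequality: if
`δ^α e^m + F(u^m + e^m, u^{m−1} + e^{m−1}) − F(u^m, u^{m−1}) = ρ^m`, `e^0 = 0`,
and `F` satisfies the one-sided Lipschitz conditions, then
`δ^α |e|^m − λ0|e^m| − λ1|e^{m−1}| ≤ |ρ^m|`. -/
theorem stmt16 (α lam0 lam1 T : ℝ) (hα : α ∈ Set.Ioo (0:ℝ) 1)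
    (hlam0 : 0 ≤ lam0) (hlam1 : 0 ≤ lam1) (hT : 0 < T)
    (M : ℕ) (t : ℕ → ℝ) (ht0 : t 0 = 0) (htT : t M = T)
    (hmono : ∀ j, 1 ≤ j → j ≤ M → t (j - 1) < t j)
    (F : ℝ → ℝ → ℝ)
    (hFmono : ∀ w : ℝ, Monotone fun v => F v w + lam0 * v)
    (hFlip : ∀ v w ω : ℝ, |F v (w + ω) - F v w| ≤ lam1 * |ω|)
    (u e ρ : ℕ → ℝ) (he0 : e 0 = 0)
    (heq : ∀ m, 1 ≤ m → m ≤ M →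
      l1 α t e m + F (u m + e m) (u (m - 1) + e (m - 1)) - F (u m) (u (m - 1)) = ρ m) :
    ∀ m, 1 ≤ m → m ≤ M →
      l1 α t (fun j => |e j|) m - lam0 * |e m| - lam1 * |e (m - 1)| ≤ |ρ m| := by
  obtain ⟨hα0, hα1⟩ := hα
  -- strict monotonicity of the mesh
  have htlt : ∀ i j : ℕ, i < j → j ≤ M → t i < t j := by
    intro i j hij hjM
    induction j with
    | zero => omega
    | succ n ih =>
      have h1 : t n < t (n + 1) := by
        have := hmono (n + 1) (by omega) hjM
        simpa using this
      rcases Nat.lt_succ_iff_lt_or_eq.mp hij with h | h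
      · exact lt_trans (ih h (by omega)) h1
      · subst h; exact h1
  have htle : ∀ i j : ℕ, i ≤ j → j ≤ M → t i ≤ t j := by
    intro i j hij hjM
    rcases eq_or_lt_of_le hij with h | h
    · subst h; exact le_rfl
    · exact (htlt i j h hjM).le
  -- positivity of Gamma factor
  have hc : (0:ℝ) ≤ 1 / Real.Gamma (1 - α) := by
    have := Real.Gamma_pos_of_pos (by linarith : (0:ℝ) < 1 - α)
    positivity
  intro m hm1 hmM
  -- integrability of the kernel on any interval
  have hint : ∀ p q : ℝ, IntervalIntegrable (fun s => (t m - s) ^ (-α)) volume p q := by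
    intro p q
    have h := (intervalIntegrable_rpow' (a := t m - p) (b := t m - q)
      (by linarith : (-1:ℝ) < -α)).comp_sub_left (t m)
    simpa using h
  -- the sign of e m
  set σ : ℝ := if e m < 0 then -1 else 1 with hσdef
  have hσabs : σ * e m = |e m| := by
    by_cases h : e m < 0
    · simp [hσdef, h, abs_of_neg h]
    · simp [hσdef, h, abs_of_nonneg (not_lt.mp h)]
  have hσ1 : |σ| = 1 := by
    by_cases h : e m < 0 <;> simp [hσdef, h]
  have hσle : ∀ j, σ * e j ≤ |e j| := by
    intro j
    calc σ * e j ≤ |σ * e j| := le_abs_self _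
    _ = |e j| := by rw [abs_mul, hσ1, one_mul]
  -- coefficients
  set k : ℕ → ℝ := fun j => ∫ s in (t (j - 1))..(t j), (t m - s) ^ (-α) with hkdef
  set a : ℕ → ℝ := fun j => k j / (t j - t (j - 1)) with hadef
  set b : ℕ → ℝ := fun j => |e j| - σ * e j with hbdef
  have hb : ∀ j, 0 ≤ b j := by
    intro j
    have := hσle j
    simp only [hbdef]
    linarith
  have hb0 : b 0 = 0 := by simp [hbdef, he0]
  have hbm : b m = 0 := by
    simp only [hbdef]
    linarith [hσabs]
  -- monotonicity of the averaged kernel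
  have ha : ∀ j, 1 ≤ j → j + 1 ≤ m → a j ≤ a (j + 1) := by
    intro j hj1 hjm
    have hjM : j + 1 ≤ M := le_trans hjm hmM
    have hτj : 0 < t j - t (j - 1) := by
      have := hmono j hj1 (by omega); linarith
    have hτj1 : 0 < t (j + 1) - t j := by
      have h := hmono (j + 1) (by omega) hjM
      simp only [Nat.add_sub_cancel] at h
      linarith
    have hjm' : t j < t m := htlt j m (by omega) hmM
    set g : ℝ := (t m - t j) ^ (-α) with hgdef
    -- upper bound for k j
    have hup : k j ≤ (t j - t (j - 1)) * g := by
      have hmono' : ∀ s ∈ Set.Icc (t (j - 1)) (t j),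
          (t m - s) ^ (-α) ≤ g := by
        intro s hs
        exact Real.rpow_le_rpow_of_nonpos (by linarith [hs.2]) (by linarith [hs.2])
          (by linarith)
      have h := intervalIntegral.integral_mono_on (by linarith) (hint _ _)
        (_root_.intervalIntegrable_const (c := g)) hmono'
      rw [intervalIntegral.integral_const, smul_eq_mul] at h
      exact h
    -- lower bound for k (j+1)
    have hlo : (t (j + 1) - t j) * g ≤ k (j + 1) := by
      have hne : ∀ᵐ s ∂(volume.restrict (Set.Icc (t j) (t (j + 1)))), s ≠ t m := by
        apply ae_restrict_of_ae
        rw [MeasureTheory.ae_iff]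
        simpa [Set.setOf_eq_eq_singleton] using (Real.volume_singleton (x := t m))
      have hmem := ae_restrict_mem (μ := volume) (measurableSet_Icc
        (a := t j) (b := t (j + 1)))
      have hle' : (fun _ : ℝ => g) ≤ᵐ[volume.restrict (Set.Icc (t j) (t (j + 1)))]
          fun s => (t m - s) ^ (-α) := by
        filter_upwards [hne, hmem] with s hsne hs
        have hsm : s ≤ t m := le_trans hs.2 (htle (j + 1) m hjm hmM)
        have hsm' : s < t m := lt_of_le_of_ne hsm hsne
        exact Real.rpow_le_rpow_of_nonpos (by linarith) (by linarith [hs.1]) (by linarith)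
      have h := intervalIntegral.integral_mono_ae_restrict (by linarith)
        (_root_.intervalIntegrable_const (c := g)) (hint _ _) hle'
      rw [intervalIntegral.integral_const, smul_eq_mul] at h
      have h2 : k (j + 1) = ∫ s in (t j)..(t (j + 1)), (t m - s) ^ (-α) := by
        simp only [hkdef, Nat.add_sub_cancel]
      rw [h2]
      exact h
    calc a j = k j / (t j - t (j - 1)) := rfl
      _ ≤ g := by rw [div_le_iff₀ hτj]; linarith [hup]
      _ ≤ k (j + 1) / (t (j + 1) - t j) := by
          rw [le_div_iff₀ hτj1]; linarith [hlo]
      _ = a (j + 1) := by simp [hadef]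
  -- comparison of l1 of |e| with σ * l1 of e
  have hkey : l1 α t (fun j => |e j|) m ≤ σ * l1 α t e m := by
    have hdiff : σ * l1 α t e m - l1 α t (fun j => |e j|) m
        = (1 / Real.Gamma (1 - α)) *
          ∑ i ∈ Finset.range m, a (i + 1) * (b i - b (i + 1)) := by
      unfold l1
      rw [← Finset.Ico_add_one_right_eq_Icc, Finset.sum_Ico_eq_sum_range, Finset.sum_Ico_eq_sum_range]
      simp only [Nat.add_sub_cancel, Finset.mul_sum, ← Finset.sum_sub_distrib]
      apply Finset.sum_congr rfl
      intro i hi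
      have h2 : 1 + i = i + 1 := Nat.add_comm 1 i
      simp only [h2, Nat.add_sub_cancel, hadef, hbdef, hkdef]
      ring
    have h0 : 0 ≤ (1 / Real.Gamma (1 - α)) *
        ∑ i ∈ Finset.range m, a (i + 1) * (b i - b (i + 1)) :=
      mul_nonneg hc (abel_nonneg a b m hm1 hb hb0 hbm ha)
    linarith
  -- sign manipulations with F
  have hF1 : -(lam1 * |e (m - 1)|)
      ≤ σ * (F (u m + e m) (u (m - 1) + e (m - 1)) - F (u m + e m) (u (m - 1))) := by
    have h := hFlip (u m + e m) (u (m - 1)) (e (m - 1))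
    have h2 : |σ * (F (u m + e m) (u (m - 1) + e (m - 1)) - F (u m + e m) (u (m - 1)))|
        ≤ lam1 * |e (m - 1)| := by
      rw [abs_mul, hσ1, one_mul]; exact h
    linarith [neg_abs_le (σ * (F (u m + e m) (u (m - 1) + e (m - 1))
      - F (u m + e m) (u (m - 1))))]
  have hF0 : -(lam0 * |e m|)
      ≤ σ * (F (u m + e m) (u (m - 1)) - F (u m) (u (m - 1))) := by
    by_cases h : e m < 0
    · have hσ : σ = -1 := by simp [hσdef, h]
      have hmon := hFmono (u (m - 1)) (by linarith : u m + e m ≤ u m)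
      simp only at hmon
      have habs : |e m| = -e m := abs_of_neg h
      rw [hσ, habs]
      nlinarith [hmon]
    · have hσ : σ = 1 := by simp [hσdef, h]
      have hmon := hFmono (u (m - 1)) (by linarith [not_lt.mp h] : u m ≤ u m + e m)
      simp only at hmon
      have habs : |e m| = e m := abs_of_nonneg (not_lt.mp h)
      rw [hσ, habs]
      nlinarith [hmon]
  have hρ : σ * ρ m ≤ |ρ m| := by
    calc σ * ρ m ≤ |σ * ρ m| := le_abs_self _
    _ = |ρ m| := by rw [abs_mul, hσ1, one_mul]
  have key := heq m hm1 hmM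
  have hsplit : σ * l1 α t e m
      = σ * ρ m
        - σ * (F (u m + e m) (u (m - 1) + e (m - 1)) - F (u m + e m) (u (m - 1)))
        - σ * (F (u m + e m) (u (m - 1)) - F (u m) (u (m - 1))) := by
    rw [← key]; ring
  linarith [hkey]
end
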